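/- arXiv:1207.0164 — 2 statements merged into one kernel-verified Lean document; each statement's English description precedes it below -/
import Mathlib

section
/- Let P, Q ⊂ ℝ^n be rational polytopes such that P^∨ is a lattice polyhedron and P ⊕ Q is a free sum. Then Ehr_{P⊕Q}(t) = (1 − t)·Ehr_P(t)·Ehr_Q(t) in ℤ[[t]]; equivalently, for every integer k ≥ 0, L_{P⊕Q}(k) = Σ_{i=0}^{k} L_P(i)·L_Q(k−i) − Σ_{i=0}^{k−1} L_P(i)·L_Q(k−1−i). -/
open Set Pointwise
open scoped Classical

noncomputable section

namespace ArxivFreeSum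

/-- A point of `ℝ^m` is an integer lattice point iff all coordinates are integers. -/
def IsLat {m : ℕ} (x : Fin m → ℝ) : Prop := ∀ i, ∃ z : ℤ, x i = (z : ℝ)

/-- The set of integer lattice points of a set `S`. -/
def latt {m : ℕ} (S : Set (Fin m → ℝ)) : Set (Fin m → ℝ) := {x | x ∈ S ∧ IsLat x}

variable {n : ℕ}

/-- The affine embedding `α : ℝ^n → ℝ^{n+1}`, `a ↦ (a, 1)`. -/
def emb (a : Fin n → ℝ) : Fin (n + 1) → ℝ := Fin.snoc a 1

/-- The cone over `K`: all nonnegative multiples of `α(K)`. -/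
def cone (K : Set (Fin n → ℝ)) : Set (Fin (n + 1) → ℝ) :=
  {x | ∃ l : ℝ, ∃ a ∈ K, 0 ≤ l ∧ x = l • emb a}

/-- The last standard basis vector `e_{n+1}` of `ℝ^{n+1}`. -/
def eLast (n : ℕ) : Fin (n + 1) → ℝ := Pi.single (Fin.last n) 1

/-- The vertical projection `ε_J` onto the lower envelope of `cone J`. -/
def eps (J : Set (Fin n → ℝ)) (x : Fin (n + 1) → ℝ) : Fin (n + 1) → ℝ :=
  x - sSup {l : ℝ | x - l • eLast n ∈ cone J} • eLast n

/-- The lower envelope of `cone J`. -/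
def lenv (J : Set (Fin n → ℝ)) : Set (Fin (n + 1) → ℝ) := eps J '' cone J

/-- The lower lattice envelope of `cone J`. -/
def llenv (J : Set (Fin n → ℝ)) : Set (Fin (n + 1) → ℝ) := eps J '' latt (cone J)

/-- `J ⊕ K` is a free sum. -/
def IsFreeSum (J K : Set (Fin n → ℝ)) : Prop :=
  (0 : Fin n → ℝ) ∈ J ∧ (0 : Fin n → ℝ) ∈ K ∧
    ∀ m : Fin n → ℝ, m ∈ Submodule.span ℝ (J ∪ K) → IsLat m →
      ∃! q : (Fin n → ℝ) × (Fin n → ℝ),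
        (q.1 ∈ Submodule.span ℝ J ∧ IsLat q.1) ∧
        (q.2 ∈ Submodule.span ℝ K ∧ IsLat q.2) ∧ m = q.1 + q.2

/-- `N_{J,K}(m)`: the number of pairs of lattice points of `cone J` and `cone K` summing
to `m`. -/
def Npairs (J K : Set (Fin n → ℝ)) (m : Fin (n + 1) → ℤ) : ℕ :=
  Set.ncard {q : (Fin (n + 1) → ℝ) × (Fin (n + 1) → ℝ) |
    q.1 ∈ latt (cone J) ∧ q.2 ∈ latt (cone K) ∧ q.1 + q.2 = fun i => (m i : ℝ)}

/-- The coefficientwise form of the multivariate Braun equation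
`σ_{cone(J⊕K)} = (1 - z_{n+1}) σ_{cone J} σ_{cone K}`. -/
def BraunEq (J K : Set (Fin n → ℝ)) : Prop :=
  ∀ m : Fin (n + 1) → ℤ,
    (Npairs J K m : ℤ) - (Npairs J K (m - Pi.single (Fin.last n) 1) : ℤ) =
      if (fun i => (m i : ℝ)) ∈ cone (convexHull ℝ (J ∪ K)) then 1 else 0

/-- A rational polytope: convex hull of finitely many rational points. -/
def IsRatPolytope (P : Set (Fin n → ℝ)) : Prop :=
  ∃ V : Finset (Fin n → ℝ), (∀ v ∈ V, ∀ i, ∃ q : ℚ, v i = (q : ℝ)) ∧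
    P = convexHull ℝ (V : Set (Fin n → ℝ))

/-- A lattice polytope: convex hull of finitely many lattice points. -/
def IsLatPolytope (P : Set (Fin n → ℝ)) : Prop :=
  ∃ V : Finset (Fin n → ℝ), (∀ v ∈ V, IsLat v) ∧ P = convexHull ℝ (V : Set (Fin n → ℝ))

/-- The polar dual `P^∨ ⊆ (lin P)^*` of a polytope `P` containing the origin. -/
def dualSet (P : Set (Fin n → ℝ)) : Set (Module.Dual ℝ (Submodule.span ℝ P)) :=
  {φ | ∀ a : Submodule.span ℝ P, (a : Fin n → ℝ) ∈ P → φ a ≤ 1}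

/-- Membership in the dual integer lattice `(lin P)^*_ℤ`. -/
def IsDualLatticePt (P : Set (Fin n → ℝ)) (φ : Module.Dual ℝ (Submodule.span ℝ P)) : Prop :=
  ∀ a : Submodule.span ℝ P, IsLat (a : Fin n → ℝ) → ∃ z : ℤ, φ a = (z : ℝ)

/-- `P^∨` is a lattice polyhedron: every vertex (= extreme point) of `P^∨` lies in the
dual integer lattice. -/
def DualIsLatticePolyhedron (P : Set (Fin n → ℝ)) : Prop :=
  ∀ φ ∈ Set.extremePoints ℝ (dualSet P), IsDualLatticePt P φ

/-- `den(P^∨)`: the smallest positive integer `d` such that `d • P^∨` is a lattice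
polyhedron. -/
def dualDen (P : Set (Fin n → ℝ)) : ℕ :=
  sInf {d : ℕ | 0 < d ∧ ∀ φ ∈ Set.extremePoints ℝ (dualSet P), IsDualLatticePt P ((d : ℝ) • φ)}

/-- `L_P(k)`, with `L_P(0) = 1`. -/
def ehr (P : Set (Fin n → ℝ)) (k : ℕ) : ℕ :=
  if k = 0 then 1 else Set.ncard (latt ((k : ℝ) • P))

/-- The coefficientwise form of `Ehr_{P⊕Q}(t) = (1-t) Ehr_P(t) Ehr_Q(t)`. -/
def EhrEq (P Q : Set (Fin n → ℝ)) : Prop :=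
  ∀ k : ℕ,
    (ehr (convexHull ℝ (P ∪ Q)) k : ℤ) =
      (∑ i ∈ Finset.range (k + 1), (ehr P i : ℤ) * (ehr Q (k - i) : ℤ)) -
        ∑ i ∈ Finset.range k, (ehr P i : ℤ) * (ehr Q (k - 1 - i) : ℤ)

/-- `P` is reflexive: a lattice polytope containing the origin in its relative interior
whose polar dual is a lattice polytope. -/
def IsReflexive (P : Set (Fin n → ℝ)) : Prop :=
  IsLatPolytope P ∧ (0 : Fin n → ℝ) ∈ intrinsicInterior ℝ P ∧ DualIsLatticePolyhedron P

/-- `P` is Gorenstein of index `k`. -/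
def IsGorenstein (P : Set (Fin n → ℝ)) (k : ℕ) : Prop :=
  IsLatPolytope P ∧ 0 < k ∧
    ∃ m : Fin n → ℝ, IsLat m ∧ IsReflexive ((fun x => x - m) '' ((k : ℝ) • P))

/-- `p` is a rational point. -/
def IsRatPt (p : Fin n → ℝ) : Prop := ∀ i, ∃ q : ℚ, p i = (q : ℝ)

/-- Membership in the lattice `Λ^p` generated by `e_1, …, e_n` and `p`. -/
def InLambda (p x : Fin n → ℝ) : Prop :=
  ∃ (z : Fin n → ℤ) (c : ℤ), x = (fun i => (z i : ℝ)) + (c : ℝ) • p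

/-- `den(p)`: the lcm of the denominators of the coordinates of `p`, i.e. the least
positive integer `r` with `r • p` a lattice point. -/
def denPt (p : Fin n → ℝ) : ℕ := sInf {r : ℕ | 0 < r ∧ IsLat ((r : ℝ) • p)}

/-- The projection `ε^p_J` parallel to `α(p)` onto the `p`-lower envelope of `cone J`. -/
def epsP (p : Fin n → ℝ) (J : Set (Fin n → ℝ)) (x : Fin (n + 1) → ℝ) : Fin (n + 1) → ℝ :=
  x - sSup {l : ℝ | x - l • emb p ∈ cone J} • emb p

/-- The `p`-lower envelope of `cone J`. -/
def plenv (p : Fin n → ℝ) (J : Set (Fin n → ℝ)) : Set (Fin (n + 1) → ℝ) := epsP p J '' cone J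

/-- The `p`-lower lattice envelope of `cone J`. -/
def pllenv (p : Fin n → ℝ) (J : Set (Fin n → ℝ)) : Set (Fin (n + 1) → ℝ) :=
  epsP p J '' latt (cone J)

/-- `J ⊕ K` is an affine free sum with common (rational) point `p`. -/
def IsAffineFreeSum (J K : Set (Fin n → ℝ)) (p : Fin n → ℝ) : Prop :=
  IsRatPt p ∧ p ∈ J ∧ p ∈ K ∧
    ((affineSpan ℝ J : Set (Fin n → ℝ)) ∩ (affineSpan ℝ K : Set (Fin n → ℝ)) = {p}) ∧
    ∀ m : Fin n → ℝ, m ∈ Submodule.span ℝ ((fun x => x - p) '' (J ∪ K)) → InLambda p m →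
      ∃! q : (Fin n → ℝ) × (Fin n → ℝ),
        (q.1 ∈ Submodule.span ℝ ((fun x => x - p) '' J) ∧ InLambda p q.1) ∧
        (q.2 ∈ Submodule.span ℝ ((fun x => x - p) '' K) ∧ InLambda p q.2) ∧ m = q.1 + q.2




section Aux
variable {n : ℕ}





lemma isLat_zero : IsLat (0 : Fin n → ℝ) := fun i => ⟨0, by simp⟩
lemma IsLat.add {x y : Fin n → ℝ} (hx : IsLat x) (hy : IsLat y) : IsLat (x + y) := by
  intro i
  obtain ⟨a, ha⟩ := hx i; obtain ⟨b, hb⟩ := hy i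
  exact ⟨a + b, by simp [ha, hb]⟩

lemma smul_set_mono_of_zero_mem {P : Set (Fin n → ℝ)} (hconv : Convex ℝ P)
    (h0 : (0 : Fin n → ℝ) ∈ P) {s t : ℝ} (hs : 0 ≤ s) (hst : s ≤ t) :
    s • P ⊆ t • P := by
  rcases eq_or_lt_of_le (hs.trans hst) with ht | ht
  · have : s = 0 := le_antisymm (hst.trans ht.symm.le) hs
    rw [this, ← ht]
  · rintro x ⟨p, hp, rfl⟩
    refine ⟨(s / t) • p, ?_, ?_⟩
    · have : s / t ≤ 1 := by rw [div_le_one ht]; exact hst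
      have := hconv h0 hp (a := 1 - s / t) (b := s / t) (by linarith) (by positivity) (by ring)
      simpa using this
    · show t • ((s / t) • p) = s • p
      rw [smul_smul, mul_div_cancel₀ _ ht.ne']

lemma zero_mem_smul_set {P : Set (Fin n → ℝ)} (h0 : (0 : Fin n → ℝ) ∈ P) (s : ℝ) :
    (0 : Fin n → ℝ) ∈ s • P := ⟨0, h0, by simp⟩

lemma convexHull_union_eq {A B : Set (Fin n → ℝ)} (hA : Convex ℝ A) (hB : Convex ℝ B)
    (hA0 : A.Nonempty) (hB0 : B.Nonempty) :
    convexHull ℝ (A ∪ B) =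
      {x | ∃ θ : ℝ, ∃ a ∈ A, ∃ b ∈ B, 0 ≤ θ ∧ θ ≤ 1 ∧ x = θ • a + (1 - θ) • b} := by
  apply le_antisymm
  · apply convexHull_min
    · rintro x (hx | hx)
      · obtain ⟨b, hb⟩ := hB0
        exact ⟨1, x, hx, b, hb, zero_le_one, le_refl 1, by simp⟩
      · obtain ⟨a, ha⟩ := hA0
        exact ⟨0, a, ha, x, hx, le_refl 0, zero_le_one, by simp⟩
    · rintro x ⟨θ, a, ha, b, hb, hθ0, hθ1, rfl⟩ y ⟨η, c, hc, d, hd, hη0, hη1, rfl⟩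
        u v hu hv huv
      by_cases hP : u * θ + v * η = 0
      · have h1 : u * θ = 0 := by nlinarith [mul_nonneg hu hθ0, mul_nonneg hv hη0]
        have h2 : v * η = 0 := by nlinarith [mul_nonneg hu hθ0, mul_nonneg hv hη0]
        refine ⟨0, a, ha, u • b + v • d, hB hb hd (by linarith) (by linarith) huv, le_refl 0,
          zero_le_one, ?_⟩
        have e1 : u * (1 - θ) = u := by nlinarith
        have e2 : v * (1 - η) = v := by nlinarith
        simp only [smul_add, smul_smul, e1, e2, h1, h2, zero_smul, sub_zero, one_smul,
          zero_add, add_zero]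
        module
      · set w := u * θ + v * η with hw
        have hwpos : 0 < w := lt_of_le_of_ne (by positivity) (Ne.symm hP)
        have hw1 : w ≤ 1 := by nlinarith
        by_cases hP2 : w = 1
        · have e1 : u * (1 - θ) = 0 := by nlinarith [mul_nonneg hu hθ0, mul_nonneg hv hη0]
          have e2 : v * (1 - η) = 0 := by nlinarith [mul_nonneg hu hθ0, mul_nonneg hv hη0]
          refine ⟨1, ((u*θ)/w) • a + ((v*η)/w) • c,
            hA ha hc (by positivity) (by positivity) (by field_simp; linarith), b, hb, zero_le_one,
            le_refl 1, ?_⟩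
          simp only [smul_add, smul_smul, sub_self, zero_smul, add_zero, one_mul, hP2, div_one]
          rw [e1, e2]
          simp only [zero_smul, add_zero, zero_add]
        · have h1w : (0:ℝ) < 1 - w := lt_of_le_of_ne (by linarith) (by
            intro h; exact hP2 (by linarith))
          refine ⟨w, ((u*θ)/w) • a + ((v*η)/w) • c,
            hA ha hc (by positivity) (by positivity) (by field_simp; linarith),
            ((u*(1-θ))/(1-w)) • b + ((v*(1-η))/(1-w)) • d,
            hB hb hd (div_nonneg (mul_nonneg hu (by linarith)) h1w.le)
              (div_nonneg (mul_nonneg hv (by linarith)) h1w.le)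
              (by field_simp; nlinarith), hwpos.le, hw1, ?_⟩
          simp only [smul_add, smul_smul]
          rw [show w * ((u*θ)/w) = u*θ by field_simp,
              show w * ((v*η)/w) = v*η by field_simp,
              show (1-w) * ((u*(1-θ))/(1-w)) = u*(1-θ) by field_simp,
              show (1-w) * ((v*(1-η))/(1-w)) = v*(1-η) by field_simp]
          module
  · rintro x ⟨θ, a, ha, b, hb, h0, h1, rfl⟩
    have h2 : (0:ℝ) ≤ 1 - θ := by linarith
    have h3 : θ + (1 - θ) = 1 := by ring
    exact (convex_convexHull ℝ (A ∪ B)) (subset_convexHull ℝ _ (Or.inl ha))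
      (subset_convexHull ℝ _ (Or.inr hb)) h0 h2 h3






lemma latt_finite {S : Set (Fin n → ℝ)} (hS : Bornology.IsBounded S) : (latt S).Finite := by
  obtain ⟨C, hC⟩ := hS.subset_closedBall 0
  set F : Set (Fin n → ℤ) := {z | ∀ i, z i ∈ Finset.Icc (-⌈C⌉) ⌈C⌉} with hF
  have hFfin : F.Finite := by
    have : F ⊆ Set.pi Set.univ (fun _ => ((Finset.Icc (-⌈C⌉) ⌈C⌉ : Finset ℤ) : Set ℤ)) := by
      intro z hz i _
      exact hz i
    exact (Set.Finite.pi (fun i => (Finset.Icc (-⌈C⌉) ⌈C⌉).finite_toSet)).subset this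
  apply (hFfin.image (fun z : Fin n → ℤ => fun i => (z i : ℝ))).subset
  rintro x ⟨hxS, hxL⟩
  have hz : ∀ i, ∃ z : ℤ, x i = (z : ℝ) := hxL
  choose z hzx using hz
  refine ⟨z, ?_, by funext i; exact (hzx i).symm⟩
  intro i
  have hnorm : ‖x‖ ≤ C := by
    have := hC hxS
    simpa [Metric.mem_closedBall, dist_eq_norm] using this
  have h1 : |x i| ≤ C := le_trans (by simpa using norm_le_pi_norm x i) hnorm
  rw [hzx i] at h1
  have h2 : |(z i : ℝ)| ≤ (⌈C⌉ : ℝ) := h1.trans (Int.le_ceil C)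
  rw [Finset.mem_Icc]
  constructor
  · have := neg_abs_le (z i)
    have h3 : -(⌈C⌉:ℝ) ≤ (z i : ℝ) := by
      rw [abs_le] at h2; exact h2.1
    exact_mod_cast h3
  · have h3 : (z i : ℝ) ≤ (⌈C⌉:ℝ) := by rw [abs_le] at h2; exact h2.2
    exact_mod_cast h3






def ratCast : (Fin n → ℚ) →ₗ[ℚ] (Fin n → ℝ) where
  toFun v := fun i => (v i : ℝ)
  map_add' v w := by funext i; push_cast; simp
  map_smul' q v := by funext i; simp [Rat.smul_def]

lemma ratCast_apply (v : Fin n → ℚ) (i : Fin n) : ratCast v i = ((v i : ℚ) : ℝ) := rfl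

lemma ratCast_injective : Function.Injective (ratCast (n := n)) := by
  intro v w h
  funext i
  have := congrFun h i
  rw [ratCast_apply, ratCast_apply] at this
  exact_mod_cast this

lemma ratCast_mem_spanR {T : Set (Fin n → ℚ)} {v : Fin n → ℚ}
    (hv : v ∈ Submodule.span ℚ T) :
    ratCast v ∈ Submodule.span ℝ (ratCast '' T) := by
  induction hv using Submodule.span_induction with
  | mem x hx => exact Submodule.subset_span ⟨x, hx, rfl⟩
  | zero => rw [map_zero]; exact Submodule.zero_mem _
  | add x y _ _ hx hy => rw [map_add]; exact Submodule.add_mem _ hx hy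
  | smul q x _ hx =>
      rw [map_smul]
      have : (q : ℚ) • ratCast (n := n) x = (q : ℝ) • ratCast x := by
        funext i; simp [Rat.smul_def]
      rw [this]
      exact Submodule.smul_mem _ _ hx

/-- a rational functional giving `1` on `v₀ ∈ s` and `0` on the rest of a ℚ-li set -/
lemma exists_rat_dual {s : Set (Fin n → ℚ)} (hli : LinearIndependent ℚ (Subtype.val : s → _))
    {v₀ : Fin n → ℚ} (hv₀ : v₀ ∈ s) :
    ∃ φ : (Fin n → ℚ) →ₗ[ℚ] ℚ, φ v₀ = 1 ∧ ∀ v ∈ s, v ≠ v₀ → φ v = 0 := by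
  have hli' : LinearIndepOn ℚ id s := hli
  have hsub := hli'.subset_extend (Set.subset_univ s)
  set b := Module.Basis.extend hli' with hb
  refine ⟨b.coord ⟨v₀, hsub hv₀⟩, ?_, ?_⟩
  · have h1 : (b.coord ⟨v₀, hsub hv₀⟩) (b ⟨v₀, hsub hv₀⟩) = 1 := by
      rw [Module.Basis.coord_apply, Module.Basis.repr_self, Finsupp.single_apply, if_pos rfl]
    rwa [Module.Basis.extend_apply_self] at h1
  · intro v hv hne
    have h1 : (b.coord ⟨v₀, hsub hv₀⟩) (b ⟨v, hsub hv⟩) = 0 := by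
      rw [Module.Basis.coord_apply, Module.Basis.repr_self, Finsupp.single_apply, if_neg]
      intro h
      exact hne (by simpa using congrArg Subtype.val h)
    rwa [Module.Basis.extend_apply_self] at h1

/-- realification of a rational functional -/
def realify (φ : (Fin n → ℚ) →ₗ[ℚ] ℚ) : (Fin n → ℝ) →ₗ[ℝ] ℝ :=
  ∑ i : Fin n, (φ (fun j => if i = j then 1 else 0) : ℝ) • LinearMap.proj i

lemma realify_ratCast (φ : (Fin n → ℚ) →ₗ[ℚ] ℚ) (v : Fin n → ℚ) :
    realify φ (ratCast v) = (φ v : ℝ) := by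
  have hv : φ v = ∑ i : Fin n, v i * φ (fun j => if i = j then 1 else 0) := by
    conv_lhs => rw [pi_eq_sum_univ v]
    rw [map_sum]
    congr 1; funext i
    rw [map_smul]; simp [Rat.smul_def, mul_comm]
  rw [hv]
  simp only [realify, LinearMap.sum_apply, LinearMap.smul_apply, LinearMap.proj_apply]
  push_cast
  congr 1; funext i
  show (φ fun j => if i = j then 1 else 0 : ℝ) * (v i : ℝ) = (v i : ℝ) * (φ _ : ℝ)
  ring

lemma li_ratCast {s : Set (Fin n → ℚ)}
    (hli : LinearIndependent ℚ (Subtype.val : s → _)) :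
    LinearIndependent ℝ (Subtype.val : (ratCast '' s) → _) := by
  rw [linearIndependent_iff']
  intro t g hsum i₀ hi₀
  obtain ⟨v₀, hv₀s, hv₀⟩ := i₀.2
  obtain ⟨φ, hφ1, hφ0⟩ := exists_rat_dual hli hv₀s
  have happ := congrArg (realify φ) hsum
  rw [map_sum, map_zero] at happ
  have : ∀ i ∈ t, g i • realify φ (i : Fin n → ℝ) = (if i = i₀ then g i else 0) := by
    intro i hi
    obtain ⟨v, hvs, hv⟩ := i.2
    rw [← hv, realify_ratCast]
    by_cases h : i = i₀
    · subst h
      have : v = v₀ := ratCast_injective (by rw [hv, hv₀])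
      rw [this, hφ1, if_pos rfl]
      simp
    · rw [if_neg h, hφ0 v hvs, Rat.cast_zero, smul_zero]
      intro hvv
      subst hvv
      exact h (Subtype.ext (by rw [← hv, hv₀]))
  rw [Finset.sum_congr rfl (fun i hi => by
    rw [map_smul, smul_eq_mul, ← smul_eq_mul, this i hi])] at happ
  rw [Finset.sum_ite_eq' t i₀ g, if_pos hi₀] at happ
  exact happ

lemma finrank_span_ratCast {T : Set (Fin n → ℚ)} (hT : T.Finite) :
    Module.finrank ℝ (Submodule.span ℝ (ratCast '' T)) =
      Module.finrank ℚ (Submodule.span ℚ T) := by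
  obtain ⟨s, hsub, hspan, hli⟩ := exists_linearIndependent ℚ T
  have hsfin : s.Finite := hT.subset hsub
  haveI := hsfin.fintype
  haveI := (hsfin.image (ratCast (n := n))).fintype
  have h1 : Submodule.span ℝ (ratCast '' T) = Submodule.span ℝ (ratCast '' s) := by
    apply le_antisymm
    · rw [Submodule.span_le]
      rintro x ⟨v, hv, rfl⟩
      exact ratCast_mem_spanR (hspan ▸ Submodule.subset_span hv)
    · exact Submodule.span_mono (Set.image_mono hsub)
  rw [h1, ← hspan]
  rw [finrank_span_set_eq_card (li_ratCast hli), finrank_span_set_eq_card hli]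
  rw [Set.toFinset_image]
  exact Finset.card_image_of_injective _ ratCast_injective

lemma exists_lattice_of_inf_ne_bot {TU TW : Set (Fin n → ℚ)} (hTU : TU.Finite)
    (hTW : TW.Finite)
    (hne : Submodule.span ℝ (ratCast '' TU) ⊓ Submodule.span ℝ (ratCast '' TW) ≠ ⊥) :
    ∃ x : Fin n → ℝ, x ≠ 0 ∧ IsLat x ∧
      x ∈ Submodule.span ℝ (ratCast '' TU) ⊓ Submodule.span ℝ (ratCast '' TW) := by
  set U := Submodule.span ℝ (ratCast (n := n) '' TU)
  set W := Submodule.span ℝ (ratCast (n := n) '' TW)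
  set U' := Submodule.span ℚ TU
  set W' := Submodule.span ℚ TW
  -- finrank identity
  have hU : Module.finrank ℝ U = Module.finrank ℚ U' := finrank_span_ratCast hTU
  have hW : Module.finrank ℝ W = Module.finrank ℚ W' := finrank_span_ratCast hTW
  have hsup : Module.finrank ℝ (U ⊔ W : Submodule ℝ _) =
      Module.finrank ℚ (U' ⊔ W' : Submodule ℚ _) := by
    have e1 : (U ⊔ W : Submodule ℝ _) = Submodule.span ℝ (ratCast '' (TU ∪ TW)) := by
      rw [Set.image_union, Submodule.span_union]
    have e2 : (U' ⊔ W' : Submodule ℚ _) = Submodule.span ℚ (TU ∪ TW) := by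
      rw [Submodule.span_union]
    rw [e1, e2, finrank_span_ratCast (hTU.union hTW)]
  have hadd : Module.finrank ℝ (U ⊔ W : Submodule ℝ _) + Module.finrank ℝ (U ⊓ W : Submodule ℝ _)
      = Module.finrank ℝ U + Module.finrank ℝ W := Submodule.finrank_sup_add_finrank_inf_eq U W
  have hadd' : Module.finrank ℚ (U' ⊔ W' : Submodule ℚ _) +
      Module.finrank ℚ (U' ⊓ W' : Submodule ℚ _)
      = Module.finrank ℚ U' + Module.finrank ℚ W' :=
    Submodule.finrank_sup_add_finrank_inf_eq U' W'
  have hinf : Module.finrank ℝ (U ⊓ W : Submodule ℝ _) =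
      Module.finrank ℚ (U' ⊓ W' : Submodule ℚ _) := by omega
  have hpos : Module.finrank ℝ (U ⊓ W : Submodule ℝ _) ≠ 0 := by
    intro h
    exact hne (Submodule.finrank_eq_zero.mp h)
  have h2 : (U' ⊓ W' : Submodule ℚ _) ≠ ⊥ := by
    intro h
    rw [h] at hinf
    simp only [finrank_bot] at hinf
    exact hpos hinf
  obtain ⟨v, hv, hvne⟩ := (Submodule.ne_bot_iff _).mp h2
  set N : ℕ := ∏ i : Fin n, (v i).den with hN
  have hNpos : 0 < N := Finset.prod_pos (fun i _ => (v i).pos)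
  refine ⟨(N : ℝ) • ratCast v, ?_, ?_, ?_⟩
  · simp only [ne_eq, smul_eq_zero, Nat.cast_eq_zero, not_or]
    refine ⟨hNpos.ne', fun h => hvne ?_⟩
    exact ratCast_injective (by rw [h, map_zero])
  · intro i
    have hdvd : ((v i).den : ℤ) ∣ (N : ℤ) := by
      exact_mod_cast Finset.dvd_prod_of_mem (fun i => (v i).den) (Finset.mem_univ i)
    obtain ⟨m, hm⟩ := hdvd
    refine ⟨(v i).num * m, ?_⟩
    show (N : ℝ) * ((v i : ℚ) : ℝ) = _
    rw [Rat.cast_def]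
    have hden : ((v i).den : ℝ) ≠ 0 := by exact_mod_cast (v i).den_nz
    have hmN : (N : ℝ) = ((v i).den : ℝ) * (m : ℝ) := by exact_mod_cast hm
    rw [hmN]
    push_cast
    field_simp
  · constructor
    · exact Submodule.smul_mem _ _ (ratCast_mem_spanR (by exact hv.1))
    · exact Submodule.smul_mem _ _ (ratCast_mem_spanR (by exact hv.2))












/-- the subspace of functionals vanishing on a set -/
def Dsub {U : Submodule ℝ (Fin n → ℝ)} (S : Set U) : Submodule ℝ (Module.Dual ℝ U) where
  carrier := {ψ | ∀ v ∈ S, ψ v = 0}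
  add_mem' := by intro a b ha hb v hv; simp [ha v hv, hb v hv]
  zero_mem' := by intro v hv; simp
  smul_mem' := by intro c a ha v hv; simp [ha v hv]

lemma mem_Dsub {U : Submodule ℝ (Fin n → ℝ)} {S : Set U} {ψ : Module.Dual ℝ U} :
    ψ ∈ Dsub S ↔ ∀ v ∈ S, ψ v = 0 := Iff.rfl

lemma Dsub_antitone {U : Submodule ℝ (Fin n → ℝ)} {S T : Set U} (h : S ⊆ T) :
    Dsub T ≤ Dsub S := fun ψ hψ v hv => hψ v (h hv)

section Dual

variable {P : Set (Fin n → ℝ)} {VP : Finset (Fin n → ℝ)}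

/-- lifted vertex set inside the span -/
def Vset (P : Set (Fin n → ℝ)) (VP : Finset (Fin n → ℝ)) : Set (Submodule.span ℝ P) :=
  Subtype.val ⁻¹' (VP : Set (Fin n → ℝ))

lemma Vset_finite : (Vset P VP).Finite :=
  VP.finite_toSet.preimage (Subtype.val_injective.injOn)

variable (hVP : P = convexHull ℝ (VP : Set (Fin n → ℝ)))

include hVP

lemma VP_subset_P : (VP : Set (Fin n → ℝ)) ⊆ P := hVP ▸ subset_convexHull ℝ _

lemma mem_dualSet_iff {φ : Module.Dual ℝ (Submodule.span ℝ P)} :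
    φ ∈ dualSet P ↔ ∀ v ∈ Vset P VP, φ v ≤ 1 := by
  constructor
  · intro hφ v hv
    exact hφ v (VP_subset_P hVP hv)
  · intro hφ a ha
    obtain ⟨q, hq⟩ := Submodule.exists_isCompl (Submodule.span ℝ P)
    set f : (Fin n → ℝ) →ₗ[ℝ] ℝ :=
      φ ∘ₗ ((Submodule.span ℝ P).projectionOnto q hq) with hf
    have hfP : ∀ x ∈ P, f x ≤ 1 := by
      have hconv : Convex ℝ {w : Fin n → ℝ | f w ≤ 1} :=
        convex_halfSpace_le (LinearMap.isLinear f) 1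
      have hsub : (VP : Set (Fin n → ℝ)) ⊆ {w | f w ≤ 1} := by
        intro v hv
        have hvU : v ∈ Submodule.span ℝ P := Submodule.subset_span (VP_subset_P hVP hv)
        have : f v = φ ⟨v, hvU⟩ := by
          simp [hf, Submodule.projectionOnto_apply_left hq ⟨v, hvU⟩]
        show f v ≤ 1
        rw [this]
        exact hφ ⟨v, hvU⟩ hv
      intro x hx
      rw [hVP] at hx
      exact convexHull_min hsub hconv hx
    have : f (a : Fin n → ℝ) = φ a := by
      simp [hf, Submodule.projectionOnto_apply_left hq a]
    rw [← this]
    exact hfP _ ha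

lemma span_Vset_top : Submodule.span ℝ (Vset P VP) = ⊤ := by
  apply Submodule.map_injective_of_injective (Submodule.span ℝ P).injective_subtype
  rw [Submodule.map_span, Submodule.map_top, Submodule.range_subtype]
  have h1 : (Submodule.span ℝ P).subtype '' (Vset P VP) = (VP : Set (Fin n → ℝ)) := by
    apply Set.eq_of_subset_of_subset
    · rintro x ⟨v, hv, rfl⟩; exact hv
    · intro v hv
      have hvU : v ∈ Submodule.span ℝ P := Submodule.subset_span (VP_subset_P hVP hv)
      exact ⟨⟨v, hvU⟩, hv, rfl⟩
  rw [h1]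
  apply le_antisymm
  · rw [Submodule.span_le]; exact (VP_subset_P hVP).trans Submodule.subset_span
  · nth_rewrite 1 [hVP]
    rw [Submodule.span_le]
    have : (convexHull ℝ (VP : Set (Fin n → ℝ))) ⊆ Submodule.span ℝ (VP : Set (Fin n → ℝ)) :=
      convexHull_min Submodule.subset_span (Submodule.span ℝ _).convex
    exact this

lemma dual_eq_zero_of_vanish {ψ : Module.Dual ℝ (Submodule.span ℝ P)}
    (h : ∀ v ∈ Vset P VP, ψ v = 0) : ψ = 0 := by
  have h1 : Submodule.span ℝ (Vset P VP) ≤ LinearMap.ker ψ := by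
    rw [Submodule.span_le]; exact fun v hv => h v hv
  rw [span_Vset_top hVP] at h1
  ext x
  exact h1 (Submodule.mem_top)

/-- tight set of a functional -/
def Tight (P : Set (Fin n → ℝ)) (VP : Finset (Fin n → ℝ))
    (φ : Module.Dual ℝ (Submodule.span ℝ P)) : Set (Submodule.span ℝ P) :=
  {v ∈ Vset P VP | φ v = 1}

lemma extreme_of_Dsub_bot {φ : Module.Dual ℝ (Submodule.span ℝ P)} (hφ : φ ∈ dualSet P)
    (hD : Dsub (Tight P VP φ) = ⊥) : φ ∈ Set.extremePoints ℝ (dualSet P) := by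
  rw [mem_extremePoints]
  refine ⟨hφ, fun φ₁ h₁ φ₂ h₂ hseg => ?_⟩
  obtain ⟨a, b, ha, hb, hab, heq⟩ := hseg
  have key : ∀ χ ∈ dualSet P, ∀ χ' ∈ dualSet P, ∀ a b : ℝ, 0 < a → 0 < b → a + b = 1 →
      a • χ + b • χ' = φ → χ = φ := by
    intro χ hχ χ' hχ' a b ha hb hab heq
    have hmem : χ - φ ∈ Dsub (Tight P VP φ) := by
      intro v hv
      obtain ⟨hvV, hv1⟩ := hv
      have e1 : χ v ≤ 1 := (mem_dualSet_iff hVP).mp hχ v hvV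
      have e2 : χ' v ≤ 1 := (mem_dualSet_iff hVP).mp hχ' v hvV
      have e3 : a * χ v + b * χ' v = 1 := by
        have := congrArg (fun f : Module.Dual ℝ (Submodule.span ℝ P) => f v) heq
        simpa [hv1] using this
      have : χ v = 1 := by nlinarith
      simp [LinearMap.sub_apply, this, hv1]
    rw [hD] at hmem
    have : χ - φ = 0 := hmem
    exact sub_eq_zero.mp this
  constructor
  · exact key φ₁ h₁ φ₂ h₂ a b ha hb hab heq
  · rw [add_comm] at heq
    exact key φ₂ h₂ φ₁ h₁ b a hb ha (by linarith) heq

lemma step_lemma {φ ψ : Module.Dual ℝ (Submodule.span ℝ P)} (hφ : φ ∈ dualSet P)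
    (hψD : ψ ∈ Dsub (Tight P VP φ)) (xb : Submodule.span ℝ P) (hψx : 0 ≤ ψ xb)
    (hblock : ∃ v ∈ Vset P VP, 0 < ψ v) :
    ∃ φ' ∈ dualSet P, φ xb ≤ φ' xb ∧
      Dsub (Tight P VP φ') < Dsub (Tight P VP φ) := by
  classical
  set VFin : Finset (Submodule.span ℝ P) := (Vset_finite (P := P) (VP := VP)).toFinset with hVF
  set B : Finset (Submodule.span ℝ P) := VFin.filter (fun v => 0 < ψ v) with hBdef
  have hBne : B.Nonempty := by
    obtain ⟨v, hv, hvp⟩ := hblock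
    exact ⟨v, by simp [hBdef, hVF, Set.Finite.mem_toFinset, hv, hvp]⟩
  obtain ⟨v', hv'B, hv'min⟩ := B.exists_min_image (fun v => (1 - φ v) / ψ v) hBne
  have hv'V : v' ∈ Vset P VP := by
    have := Finset.mem_filter.mp hv'B
    simpa [hVF, Set.Finite.mem_toFinset] using this.1
  have hψv' : 0 < ψ v' := (Finset.mem_filter.mp hv'B).2
  set t : ℝ := (1 - φ v') / ψ v' with ht
  have hφv' : φ v' ≤ 1 := (mem_dualSet_iff hVP).mp hφ v' hv'V
  have ht0 : 0 ≤ t := div_nonneg (by linarith) hψv'.le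
  set φ' := φ + t • ψ with hφ'
  have hφ'mem : φ' ∈ dualSet P := by
    rw [mem_dualSet_iff hVP]
    intro v hv
    have hφv : φ v ≤ 1 := (mem_dualSet_iff hVP).mp hφ v hv
    show φ v + t * ψ v ≤ 1
    rcases le_or_gt (ψ v) 0 with hψv | hψv
    · nlinarith
    · have hvB : v ∈ B := by
        simp [hBdef, hVF, Set.Finite.mem_toFinset, hv, hψv]
      have := hv'min v hvB
      have h2 : t ≤ (1 - φ v) / ψ v := this
      have := (le_div_iff₀ hψv).mp h2
      linarith
  have htight : Tight P VP φ ⊆ Tight P VP φ' := by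
    rintro v ⟨hvV, hv1⟩
    refine ⟨hvV, ?_⟩
    show φ v + t * ψ v = 1
    rw [hψD v ⟨hvV, hv1⟩]
    simpa using hv1
  have hv't : v' ∈ Tight P VP φ' := by
    refine ⟨hv'V, ?_⟩
    show φ v' + t * ψ v' = 1
    rw [ht, div_mul_cancel₀ _ hψv'.ne']
    ring
  refine ⟨φ', hφ'mem, ?_, ?_⟩
  · show φ xb ≤ φ xb + t * ψ xb
    nlinarith
  · apply lt_of_le_of_ne (Dsub_antitone htight)
    intro hEq
    have hψ' : ψ ∈ Dsub (Tight P VP φ') := hEq ▸ hψD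
    have := hψ' v' hv't
    exact hψv'.ne' this

lemma walk (xb : Submodule.span ℝ P) (s : ℝ) (hbdd : ∀ ψ ∈ dualSet P, ψ xb ≤ s) :
    ∀ d : ℕ, ∀ φ ∈ dualSet P, Module.finrank ℝ (Dsub (Tight P VP φ)) ≤ d →
      ∃ φ' ∈ Set.extremePoints ℝ (dualSet P), φ xb ≤ φ' xb := by
  intro d
  induction d with
  | zero =>
      intro φ hφ hrank
      have hD : Dsub (Tight P VP φ) = ⊥ :=
        Submodule.finrank_eq_zero.mp (Nat.le_zero.mp hrank)
      exact ⟨φ, extreme_of_Dsub_bot hVP hφ hD, le_refl _⟩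
  | succ d ih =>
      intro φ hφ hrank
      by_cases hD : Dsub (Tight P VP φ) = ⊥
      · exact ⟨φ, extreme_of_Dsub_bot hVP hφ hD, le_refl _⟩
      obtain ⟨ψ0, hψ0D, hψ0ne⟩ := (Submodule.ne_bot_iff _).mp hD
      -- get ψ with 0 ≤ ψ xb
      have hstep : ∃ φ' ∈ dualSet P, φ xb ≤ φ' xb ∧
          Dsub (Tight P VP φ') < Dsub (Tight P VP φ) := by
        rcases le_or_gt 0 (ψ0 xb) with hge | hlt
        case inl =>
          by_cases hb1 : ∃ v ∈ Vset P VP, 0 < ψ0 v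
          · exact step_lemma hVP hφ hψ0D xb hge hb1
          · push_neg at hb1
            rcases lt_or_eq_of_le hge with hgt | heq0
            · -- unbounded ray contradiction
              exfalso
              set t0 : ℝ := (s - φ xb + 1) / (ψ0 xb) with ht0
              have ht0pos : 0 ≤ t0 := by
                apply div_nonneg _ hgt.le
                have := hbdd φ hφ
                linarith
              have hmem : φ + t0 • ψ0 ∈ dualSet P := by
                rw [mem_dualSet_iff hVP]
                intro v hv
                have h1 : φ v ≤ 1 := (mem_dualSet_iff hVP).mp hφ v hv
                have h2 : ψ0 v ≤ 0 := hb1 v hv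
                show φ v + t0 * ψ0 v ≤ 1
                nlinarith
              have := hbdd _ hmem
              have hval : (φ + t0 • ψ0) xb = φ xb + t0 * ψ0 xb := rfl
              rw [hval, ht0, div_mul_cancel₀ _ hgt.ne'] at this
              linarith
            · -- ψ0 xb = 0, try -ψ0
              by_cases hb2 : ∃ v ∈ Vset P VP, 0 < (-ψ0) v
              · exact step_lemma hVP hφ (Submodule.neg_mem _ hψ0D) xb
                  (by simp [← heq0]) hb2
              · exfalso
                push_neg at hb2
                apply hψ0ne
                apply dual_eq_zero_of_vanish hVP
                intro v hv
                have h1 := hb1 v hv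
                have h2 := hb2 v hv
                simp only [LinearMap.neg_apply, neg_nonpos] at h2
                linarith
        case inr =>
          -- use -ψ0
          by_cases hb1 : ∃ v ∈ Vset P VP, 0 < (-ψ0) v
          · exact step_lemma hVP hφ (Submodule.neg_mem _ hψ0D) xb
              (by simp; linarith) hb1
          · exfalso
            push_neg at hb1
            set t0 : ℝ := (s - φ xb + 1) / ((-ψ0) xb) with ht0
            have hgt : 0 < (-ψ0) xb := by simp; linarith
            have ht0pos : 0 ≤ t0 := by
              apply div_nonneg _ hgt.le
              have := hbdd φ hφ
              linarith
            have hmem : φ + t0 • (-ψ0) ∈ dualSet P := by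
              rw [mem_dualSet_iff hVP]
              intro v hv
              have h1 : φ v ≤ 1 := (mem_dualSet_iff hVP).mp hφ v hv
              have h2 : (-ψ0) v ≤ 0 := hb1 v hv
              show φ v + t0 * (-ψ0) v ≤ 1
              nlinarith
            have := hbdd _ hmem
            have hval : (φ + t0 • (-ψ0)) xb = φ xb + t0 * (-ψ0) xb := rfl
            rw [hval, ht0, div_mul_cancel₀ _ hgt.ne'] at this
            linarith
      obtain ⟨φ', hφ'mem, hle, hlt⟩ := hstep
      have hrank' : Module.finrank ℝ (Dsub (Tight P VP φ')) ≤ d := by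
        have := Submodule.finrank_lt_finrank_of_lt hlt
        omega
      obtain ⟨φ'', hφ'', hle'⟩ := ih φ' hφ'mem hrank'
      exact ⟨φ'', hφ'', hle.trans hle'⟩

set_option maxHeartbeats 1000000 in
lemma gauge_floor (hPdual : DualIsLatticePolyhedron P) (h0P : (0 : Fin n → ℝ) ∈ P)
    {x : Fin n → ℝ} (hx : IsLat x) {s : ℝ} (hs : 0 ≤ s) (hxP : x ∈ s • P) :
    x ∈ ((⌊s⌋₊ : ℕ) : ℝ) • P := by
  classical
  obtain ⟨p, hp, hxsp⟩ := hxP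
  have hxU : x ∈ Submodule.span ℝ P := by
    rw [← hxsp]
    exact Submodule.smul_mem _ _ (Submodule.subset_span hp)
  set xb : Submodule.span ℝ P := ⟨x, hxU⟩ with hxb
  have hpU : p ∈ Submodule.span ℝ P := Submodule.subset_span hp
  set pb : Submodule.span ℝ P := ⟨p, hpU⟩ with hpb
  have hxsb : xb = s • pb := by
    apply Subtype.ext
    exact hxsp.symm
  have hbdd : ∀ ψ ∈ dualSet P, ψ xb ≤ s := by
    intro ψ hψ
    have h1 : ψ pb ≤ 1 := hψ pb hp
    rw [hxsb, map_smul, smul_eq_mul]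
    nlinarith
  have hfloor : ((⌊s⌋₊ : ℕ) : ℤ) = ⌊s⌋ := Int.natCast_floor_eq_floor hs
  have H : ∀ φ ∈ dualSet P, φ xb ≤ ((⌊s⌋₊ : ℕ) : ℝ) := by
    intro φ hφ
    obtain ⟨φ', hext, hle⟩ := walk hVP xb s hbdd
      (Module.finrank ℝ (Dsub (Tight P VP φ))) φ hφ le_rfl
    have hφ'mem : φ' ∈ dualSet P := hext.1
    obtain ⟨z, hz⟩ := hPdual φ' hext xb hx
    have hzs : (z : ℝ) ≤ s := by rw [← hz]; exact hbdd φ' hφ'mem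
    have hzfl : z ≤ ⌊s⌋ := Int.le_floor.mpr hzs
    have : (z : ℝ) ≤ ((⌊s⌋₊ : ℕ) : ℝ) := by
      have : ((⌊s⌋₊ : ℕ) : ℤ) = ⌊s⌋ := hfloor
      exact_mod_cast hzfl.trans_eq this.symm
    calc φ xb ≤ φ' xb := hle
    _ = (z : ℝ) := hz
    _ ≤ _ := this
  rcases Nat.eq_zero_or_pos ⌊s⌋₊ with hr | hr
  · -- x must be 0
    have hall : ∀ f : Module.Dual ℝ (Submodule.span ℝ P), f xb ≤ 0 := by
      intro f
      by_contra hf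
      push_neg at hf
      have hVPne : (Vset P VP).Nonempty := by
        have h0' : (0 : Fin n → ℝ) ∈ convexHull ℝ (VP : Set (Fin n → ℝ)) := hVP ▸ h0P
        rcases VP.eq_empty_or_nonempty with hE | ⟨v, hv⟩
        · rw [hE] at h0'; simp at h0'
        · have hvU : v ∈ Submodule.span ℝ P :=
            Submodule.subset_span (VP_subset_P hVP hv)
          exact ⟨⟨v, hvU⟩, hv⟩
      set VFin : Finset (Submodule.span ℝ P) := (Vset_finite (P := P) (VP := VP)).toFinset
      have hVFne : VFin.Nonempty := by
        obtain ⟨v, hv⟩ := hVPne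
        exact ⟨v, by simpa [VFin, Set.Finite.mem_toFinset] using hv⟩
      set M : ℝ := VFin.sup' hVFne (fun v => f v) with hM
      rcases le_or_gt M 0 with hM0 | hM0
      · have hfd : f ∈ dualSet P := by
          rw [mem_dualSet_iff hVP]
          intro v hv
          have : f v ≤ M := Finset.le_sup' (fun v => f v)
            (by simpa [VFin, Set.Finite.mem_toFinset] using hv)
          linarith
        have := H f hfd
        rw [hr] at this
        simp at this
        linarith
      · have hfd : M⁻¹ • f ∈ dualSet P := by
          rw [mem_dualSet_iff hVP]
          intro v hv
          have h1 : f v ≤ M := Finset.le_sup' (fun v => f v)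
            (by simpa [VFin, Set.Finite.mem_toFinset] using hv)
          show M⁻¹ * f v ≤ 1
          rw [inv_mul_le_iff₀ hM0]
          linarith
        have := H _ hfd
        rw [hr] at this
        simp only [Nat.cast_zero] at this
        have h2 : M⁻¹ * f xb ≤ 0 := this
        nlinarith [inv_pos.mpr hM0]
    have hx0 : xb = 0 := by
      rw [← Module.forall_dual_apply_eq_zero_iff ℝ xb]
      intro f
      have h1 := hall f
      have h2 := hall (-f)
      simp only [LinearMap.neg_apply, neg_nonpos] at h2
      linarith
    have : x = 0 := by
      have := congrArg Subtype.val hx0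
      exact this
    rw [hr, this]
    simp only [Nat.cast_zero]
    rw [zero_smul_set ⟨0, h0P⟩]
    exact rfl
  · by_contra hxr
    have hrpos : (0 : ℝ) < ((⌊s⌋₊ : ℕ) : ℝ) := by exact_mod_cast hr
    have hx' : ((⌊s⌋₊ : ℕ) : ℝ)⁻¹ • x ∉ P := by
      intro hmem
      exact hxr ((Set.mem_smul_set_iff_inv_smul_mem₀ hrpos.ne' _ _).mpr hmem)
    have hPconv : Convex ℝ P := hVP ▸ convex_convexHull ℝ _
    have hPclosed : IsClosed P := by
      rw [hVP]
      exact (VP.finite_toSet.isCompact_convexHull (𝕜 := ℝ)).isClosed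
    obtain ⟨f, u, hfu, hux⟩ := geometric_hahn_banach_closed_point hPconv hPclosed hx'
    have hu0 : 0 < u := by
      have := hfu 0 h0P
      simpa using this
    set φ : Module.Dual ℝ (Submodule.span ℝ P) :=
      u⁻¹ • ((f : (Fin n → ℝ) →ₗ[ℝ] ℝ) ∘ₗ (Submodule.span ℝ P).subtype) with hφdef
    have hφmem : φ ∈ dualSet P := by
      intro a ha
      show u⁻¹ * f (a : Fin n → ℝ) ≤ 1
      rw [inv_mul_le_iff₀ hu0]
      have := hfu _ ha
      linarith
    have hHφ := H φ hφmem
    have hfx : f x = ((⌊s⌋₊ : ℕ) : ℝ) * f (((⌊s⌋₊ : ℕ) : ℝ)⁻¹ • x) := by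
      rw [map_smul, smul_eq_mul]
      field_simp
    have hφxb : φ xb = u⁻¹ * f x := by
      simp only [hφdef, LinearMap.smul_apply, LinearMap.coe_comp, Function.comp_apply,
        Submodule.subtype_apply, ContinuousLinearMap.coe_coe, smul_eq_mul]
      rfl
    rw [hφxb, hfx] at hHφ
    set a := f (((⌊s⌋₊ : ℕ) : ℝ)⁻¹ • x) with ha
    have hlt : u < a := hux
    have h1 : ((⌊s⌋₊ : ℕ) : ℝ) * a ≤ u * ((⌊s⌋₊ : ℕ) : ℝ) := by
      have h2 := mul_le_mul_of_nonneg_left hHφ hu0.le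
      rwa [← mul_assoc, mul_inv_cancel₀ hu0.ne', one_mul] at h2
    nlinarith [mul_lt_mul_of_pos_right hlt hrpos]

end Dual

end Aux

section Main

lemma span_convexHull (s : Set (Fin n → ℝ)) :
    Submodule.span ℝ (convexHull ℝ s) = Submodule.span ℝ s :=
  le_antisymm (Submodule.span_le.mpr (convexHull_min Submodule.subset_span
    (Submodule.span ℝ s).convex)) (Submodule.span_mono (subset_convexHull ℝ s))

lemma exists_rat_preimage {V : Finset (Fin n → ℝ)}
    (h : ∀ v ∈ V, ∀ i, ∃ q : ℚ, v i = (q : ℝ)) :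
    ∃ T : Set (Fin n → ℚ), T.Finite ∧ ratCast '' T = (V : Set (Fin n → ℝ)) := by
  classical
  refine ⟨Set.range (fun v : {v // v ∈ V} => fun i => Classical.choose (h v v.2 i)),
    Set.finite_range _, ?_⟩
  ext x
  constructor
  · rintro ⟨-, ⟨v, rfl⟩, rfl⟩
    have : ratCast (fun i => Classical.choose (h v v.2 i)) = (v : Fin n → ℝ) := by
      funext i
      rw [ratCast_apply]
      exact (Classical.choose_spec (h v v.2 i)).symm
    rw [this]
    exact v.2
  · intro hx
    refine ⟨fun i => Classical.choose (h x hx i), ⟨⟨x, hx⟩, rfl⟩, ?_⟩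
    funext i
    rw [ratCast_apply]
    exact (Classical.choose_spec (h x hx i)).symm

lemma span_inf_eq_bot {P Q : Set (Fin n → ℝ)} (hP : IsRatPolytope P) (hQ : IsRatPolytope Q)
    (hfree : IsFreeSum P Q) :
    Submodule.span ℝ P ⊓ Submodule.span ℝ Q = ⊥ := by
  obtain ⟨VP, hVPr, hVPe⟩ := hP
  obtain ⟨VQ, hVQr, hVQe⟩ := hQ
  obtain ⟨TP, hTPf, hTPe⟩ := exists_rat_preimage hVPr
  obtain ⟨TQ, hTQf, hTQe⟩ := exists_rat_preimage hVQr
  have hUP : Submodule.span ℝ P = Submodule.span ℝ (ratCast '' TP) := by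
    rw [hTPe, hVPe, span_convexHull]
  have hUQ : Submodule.span ℝ Q = Submodule.span ℝ (ratCast '' TQ) := by
    rw [hTQe, hVQe, span_convexHull]
  by_contra hne
  rw [hUP, hUQ] at hne
  obtain ⟨x, hxne, hxlat, hxmem⟩ := exists_lattice_of_inf_ne_bot hTPf hTQf hne
  rw [← hUP, ← hUQ] at hxmem
  have hxPQ : x ∈ Submodule.span ℝ (P ∪ Q) := by
    have := hxmem.1
    exact Submodule.span_mono Set.subset_union_left this
  obtain ⟨q0, hq0, huq⟩ := hfree.2.2 x hxPQ hxlat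
  have h1 : ((x, 0) : _ × _) = q0 :=
    huq (x, 0) ⟨⟨hxmem.1, hxlat⟩, ⟨Submodule.zero_mem _, isLat_zero⟩, by simp⟩
  have h2 : ((0, x) : _ × _) = q0 :=
    huq (0, x) ⟨⟨Submodule.zero_mem _, isLat_zero⟩, ⟨hxmem.2, hxlat⟩, by simp⟩
  rw [← h2] at h1
  exact hxne (congrArg Prod.snd h1).symm

lemma decomp_unique {P Q : Set (Fin n → ℝ)}
    (hbot : Submodule.span ℝ P ⊓ Submodule.span ℝ Q = ⊥)
    {u u' w w' : Fin n → ℝ} (hu : u ∈ Submodule.span ℝ P) (hu' : u' ∈ Submodule.span ℝ P)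
    (hw : w ∈ Submodule.span ℝ Q) (hw' : w' ∈ Submodule.span ℝ Q)
    (h : u + w = u' + w') : u = u' ∧ w = w' := by
  have hmem : u - u' ∈ Submodule.span ℝ P ⊓ Submodule.span ℝ Q := by
    constructor
    · exact Submodule.sub_mem _ hu hu'
    · have hsub : u - u' = w' - w := by
        rw [sub_eq_sub_iff_add_eq_add]
        rw [h]
        abel
      rw [hsub]
      exact Submodule.sub_mem _ hw' hw
  rw [hbot] at hmem
  have h2 : u - u' = 0 := (Submodule.mem_bot (R := ℝ)).mp hmem
  have h1 : u = u' := sub_eq_zero.mp h2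
  refine ⟨h1, ?_⟩
  have hsub : u - u' = w' - w := by
    rw [sub_eq_sub_iff_add_eq_add]
    rw [h]
    abel
  rw [h2] at hsub
  exact (sub_eq_zero.mp hsub.symm).symm

def minIdx (R : Set (Fin n → ℝ)) (x : Fin n → ℝ) : ℕ :=
  sInf {i : ℕ | x ∈ ((i : ℕ) : ℝ) • R}

lemma minIdx_le {R : Set (Fin n → ℝ)} {x : Fin n → ℝ} {j : ℕ}
    (h : x ∈ ((j : ℕ) : ℝ) • R) : minIdx R x ≤ j := Nat.sInf_le h

lemma mem_of_minIdx_le {R : Set (Fin n → ℝ)} (hconv : Convex ℝ R)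
    (h0 : (0 : Fin n → ℝ) ∈ R) {x : Fin n → ℝ} {j : ℕ}
    (hne : ∃ i : ℕ, x ∈ ((i : ℕ) : ℝ) • R) (h : minIdx R x ≤ j) :
    x ∈ ((j : ℕ) : ℝ) • R := by
  have hmem : x ∈ ((minIdx R x : ℕ) : ℝ) • R := Nat.sInf_mem hne
  exact smul_set_mono_of_zero_mem hconv h0 (by positivity) (by exact_mod_cast h) hmem

lemma ehr_eq_ncard {R : Set (Fin n → ℝ)} (h0R : (0 : Fin n → ℝ) ∈ R) (k : ℕ) :
    ehr R k = (latt (((k : ℕ) : ℝ) • R)).ncard := by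
  rcases Nat.eq_zero_or_pos k with rfl | hk
  · rw [ehr]
    simp only [if_pos rfl, Nat.cast_zero]
    rw [zero_smul_set ⟨0, h0R⟩]
    have : latt (0 : Set (Fin n → ℝ)) = {0} := by
      ext x
      simp only [latt, Set.mem_setOf_eq]
      constructor
      · rintro ⟨h1, -⟩; exact h1
      · rintro rfl; exact ⟨rfl, isLat_zero⟩
    rw [this, Set.ncard_singleton]
    simp
  · rw [ehr, if_neg hk.ne']

lemma card_window (m a b : ℕ) :
    ((Finset.range m).filter (fun i => a ≤ i ∧ i + b < m)).card = m - a - b := by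
  rcases le_or_gt m (a + b) with h | h
  · have : (Finset.range m).filter (fun i => a ≤ i ∧ i + b < m) = ∅ := by
      apply Finset.filter_false_of_mem
      intro i hi
      rw [Finset.mem_range] at hi
      omega
    rw [this]
    simp
    omega
  · have : (Finset.range m).filter (fun i => a ≤ i ∧ i + b < m) =
        Finset.Icc a (m - 1 - b) := by
      ext i
      simp only [Finset.mem_filter, Finset.mem_range, Finset.mem_Icc]
      omega
    rw [this, Nat.card_Icc]
    omega


/-- Corollary 3.5 (Ehrhart-series Braun formula for rational polytopes
with lattice polyhedral dual). -/
theorem braun_ehrhart_of_dual_lattice {n : ℕ} (hn : 1 ≤ n) (P Q : Set (Fin n → ℝ))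
    (hP : IsRatPolytope P) (hQ : IsRatPolytope Q) (hPdual : DualIsLatticePolyhedron P)
    (hfree : IsFreeSum P Q) :
    ∀ k : ℕ,
      (ehr (convexHull ℝ (P ∪ Q)) k : ℤ) =
        (∑ i ∈ Finset.range (k + 1), (ehr P i : ℤ) * (ehr Q (k - i) : ℤ)) -
          ∑ i ∈ Finset.range k, (ehr P i : ℤ) * (ehr Q (k - 1 - i) : ℤ) := by
  intro k
  classical
  rcases Nat.eq_zero_or_pos k with rfl | hk1
  · simp [ehr]
  obtain ⟨VP, hVPr, hVPe⟩ := hP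
  obtain ⟨VQ, hVQr, hVQe⟩ := hQ
  obtain ⟨h0P, h0Q, huniq⟩ := hfree
  have hPconv : Convex ℝ P := hVPe ▸ convex_convexHull ℝ _
  have hQconv : Convex ℝ Q := hVQe ▸ convex_convexHull ℝ _
  have hPne : P.Nonempty := ⟨0, h0P⟩
  have hQne : Q.Nonempty := ⟨0, h0Q⟩
  set S := convexHull ℝ (P ∪ Q) with hS
  have h0S : (0 : Fin n → ℝ) ∈ S := subset_convexHull ℝ _ (Or.inl h0P)
  have hbot : Submodule.span ℝ P ⊓ Submodule.span ℝ Q = ⊥ :=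
    span_inf_eq_bot ⟨VP, hVPr, hVPe⟩ ⟨VQ, hVQr, hVQe⟩ ⟨h0P, h0Q, huniq⟩
  have hPcomp : IsCompact P := hVPe ▸ VP.finite_toSet.isCompact_convexHull (𝕜 := ℝ)
  have hQcomp : IsCompact Q := hVQe ▸ VQ.finite_toSet.isCompact_convexHull (𝕜 := ℝ)
  have hSeq : S = convexHull ℝ ((VP : Set (Fin n → ℝ)) ∪ (VQ : Set (Fin n → ℝ))) := by
    rw [hS, hVPe, hVQe, convexHull_convexHull_union_left, convexHull_convexHull_union_right]
  have hScomp : IsCompact S :=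
    hSeq ▸ (VP.finite_toSet.union VQ.finite_toSet).isCompact_convexHull (𝕜 := ℝ)
  have hdil : ∀ (R : Set (Fin n → ℝ)), IsCompact R → ∀ i : ℕ,
      (latt (((i : ℕ) : ℝ) • R)).Finite := by
    intro R hR i
    apply latt_finite
    have h1 : ((i : ℕ) : ℝ) • R = (fun x => ((i : ℕ) : ℝ) • x) '' R := rfl
    rw [h1]
    exact (hR.image (continuous_const_smul _)).isBounded
  have hdilP := hdil P hPcomp
  have hdilQ := hdil Q hQcomp
  have hSdesc := convexHull_union_eq hPconv hQconv hPne hQne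
  have hSmem : ∀ (m : Fin n → ℝ) (j : ℕ), m ∈ ((j : ℕ) : ℝ) • S ↔
      ∃ s t : ℝ, 0 ≤ s ∧ 0 ≤ t ∧ s + t = (j : ℝ) ∧
        ∃ p ∈ P, ∃ q ∈ Q, m = s • p + t • q := by
    intro m j
    constructor
    · rintro ⟨c, hc, rfl⟩
      rw [hS, hSdesc] at hc
      obtain ⟨θ, p, hp, q, hq, hθ0, hθ1, rfl⟩ := hc
      refine ⟨j * θ, j * (1 - θ), by positivity,
        mul_nonneg (by positivity) (by linarith), by ring, p, hp, q, hq, ?_⟩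
      simp only [smul_add, smul_smul]
    · rintro ⟨s, t, hs, ht, hst, p, hp, q, hq, rfl⟩
      rcases Nat.eq_zero_or_pos j with rfl | hj
      · have hs0 : s = 0 := by norm_num at hst ⊢; linarith
        have ht0 : t = 0 := by norm_num at hst ⊢; linarith
        rw [hs0, ht0]
        simpa using zero_mem_smul_set h0S ((0 : ℕ) : ℝ)
      · have hjR : (0 : ℝ) < ((j : ℕ) : ℝ) := by exact_mod_cast hj
        refine ⟨(s / j) • p + (t / j) • q, ?_, ?_⟩
        · rw [hS, hSdesc]
          refine ⟨s / j, p, hp, q, hq, by positivity, ?_, ?_⟩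
          · rw [div_le_one hjR]; linarith
          · have h2 : 1 - s / ((j : ℕ) : ℝ) = t / ((j : ℕ) : ℝ) := by
              field_simp
              linarith
            rw [h2]
        · simp only [smul_add, smul_smul]
          rw [mul_div_cancel₀ _ hjR.ne', mul_div_cancel₀ _ hjR.ne']
  set T : Set ((Fin n → ℝ) × (Fin n → ℝ)) :=
    {q | IsLat q.1 ∧ IsLat q.2 ∧ ∃ i : ℕ, i ≤ k ∧ q.1 ∈ ((i : ℕ) : ℝ) • P ∧
      q.2 ∈ (((k - i : ℕ) : ℕ) : ℝ) • Q} with hT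
  have hmemspanP : ∀ (x : Fin n → ℝ) (s : ℝ), x ∈ s • P → x ∈ Submodule.span ℝ P := by
    rintro x s ⟨p, hp, rfl⟩
    exact Submodule.smul_mem _ _ (Submodule.subset_span hp)
  have hmemspanQ : ∀ (x : Fin n → ℝ) (s : ℝ), x ∈ s • Q → x ∈ Submodule.span ℝ Q := by
    rintro x s ⟨p, hp, rfl⟩
    exact Submodule.smul_mem _ _ (Submodule.subset_span hp)
  have hTimg : latt (((k : ℕ) : ℝ) • S) = (fun q : _ × _ => q.1 + q.2) '' T := by
    ext m
    constructor
    · rintro ⟨hmS, hmL⟩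
      obtain ⟨s, t, hs, ht, hst, p, hp, q, hq, hm⟩ := (hSmem m k).mp hmS
      have hu : s • p ∈ Submodule.span ℝ P := hmemspanP _ s ⟨p, hp, rfl⟩
      have hw : t • q ∈ Submodule.span ℝ Q := hmemspanQ _ t ⟨q, hq, rfl⟩
      have hmPQ : m ∈ Submodule.span ℝ (P ∪ Q) := by
        rw [hm]
        exact Submodule.add_mem _
          (Submodule.span_mono Set.subset_union_left hu)
          (Submodule.span_mono Set.subset_union_right hw)
      obtain ⟨q0, ⟨⟨hq01, hq01l⟩, ⟨hq02, hq02l⟩, hq0e⟩, huq⟩ := huniq m hmPQ hmL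
      have heq := decomp_unique hbot hq01 hu hq02 hw (by rw [← hm, ← hq0e])
      have hulat : IsLat (s • p) := heq.1 ▸ hq01l
      have hwlat : IsLat (t • q) := heq.2 ▸ hq02l
      have hfl : s • p ∈ ((⌊s⌋₊ : ℕ) : ℝ) • P :=
        gauge_floor hVPe hPdual h0P hulat hs ⟨p, hp, rfl⟩
      have hsk : s ≤ ((k : ℕ) : ℝ) := by linarith
      have hik : ⌊s⌋₊ ≤ k := by
        have h1 : ((⌊s⌋₊ : ℕ) : ℝ) ≤ s := Nat.floor_le hs
        exact_mod_cast h1.trans hsk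
      have htmem : t • q ∈ (((k - ⌊s⌋₊ : ℕ) : ℕ) : ℝ) • Q := by
        apply smul_set_mono_of_zero_mem hQconv h0Q ht _ ⟨q, hq, rfl⟩
        rw [Nat.cast_sub hik]
        have h1 : ((⌊s⌋₊ : ℕ) : ℝ) ≤ s := Nat.floor_le hs
        linarith
      exact ⟨(s • p, t • q), ⟨hulat, hwlat, ⌊s⌋₊, hik, hfl, htmem⟩, hm.symm⟩
    · rintro ⟨⟨x, y⟩, ⟨hx, hy, i, hik, hxP, hyQ⟩, rfl⟩
      constructor
      · apply (hSmem _ k).mpr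
        obtain ⟨p, hp, hpe⟩ := hxP
        obtain ⟨q, hq, hqe⟩ := hyQ
        refine ⟨((i : ℕ) : ℝ), (((k - i : ℕ) : ℕ) : ℝ), by positivity, by positivity, ?_,
          p, hp, q, hq, ?_⟩
        · rw [Nat.cast_sub hik]; ring
        · show x + y = _
          have hpe' : ((i : ℕ) : ℝ) • p = x := hpe
          have hqe' : (((k - i : ℕ) : ℕ) : ℝ) • q = y := hqe
          rw [← hpe', ← hqe']
      · exact hx.add hy
  have hTinj : Set.InjOn (fun q : _ × _ => q.1 + q.2) T := by
    rintro ⟨x, y⟩ ⟨-, -, i, -, hxP, hyQ⟩ ⟨x', y'⟩ ⟨-, -, i', -, hxP', hyQ'⟩ h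
    have := decomp_unique hbot (hmemspanP _ _ hxP) (hmemspanP _ _ hxP')
      (hmemspanQ _ _ hyQ) (hmemspanQ _ _ hyQ') h
    exact Prod.ext this.1 this.2
  have hTfin : T.Finite := by
    apply ((hdilP k).prod (hdilQ k)).subset
    rintro ⟨x, y⟩ ⟨hx, hy, i, hik, hxP, hyQ⟩
    constructor
    · exact ⟨smul_set_mono_of_zero_mem hPconv h0P (by positivity)
        (by exact_mod_cast hik) hxP, hx⟩
    · refine ⟨smul_set_mono_of_zero_mem hQconv h0Q (by positivity) ?_ hyQ, hy⟩
      have h1 : (k - i : ℕ) ≤ k := Nat.sub_le k i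
      exact_mod_cast h1
  set Af : ℕ → Finset (Fin n → ℝ) := fun i => (hdilP i).toFinset with hAf
  set Bf : ℕ → Finset (Fin n → ℝ) := fun i => (hdilQ i).toFinset with hBf
  set Tf : Finset ((Fin n → ℝ) × (Fin n → ℝ)) := hTfin.toFinset with hTf
  have hehrP : ∀ i : ℕ, ehr P i = (Af i).card := by
    intro i
    rw [ehr_eq_ncard h0P i, Set.ncard_eq_toFinset_card _ (hdilP i)]
  have hehrQ : ∀ i : ℕ, ehr Q i = (Bf i).card := by
    intro i
    rw [ehr_eq_ncard h0Q i, Set.ncard_eq_toFinset_card _ (hdilQ i)]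
  -- unpack Tf membership
  have hTfmem : ∀ x y, (x, y) ∈ Tf → IsLat x ∧ IsLat y ∧ ∃ i : ℕ, i ≤ k ∧
      x ∈ ((i : ℕ) : ℝ) • P ∧ y ∈ (((k - i : ℕ) : ℕ) : ℝ) • Q := by
    intro x y h
    rw [hTf, Set.Finite.mem_toFinset] at h
    exact h
  -- product filter identities
  have hprod1 : ∀ i : ℕ, i ≤ k →
      Tf.filter (fun q => q.1 ∈ Af i ∧ q.2 ∈ Bf (k - i)) = Af i ×ˢ Bf (k - i) := by
    intro i hik
    ext ⟨x, y⟩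
    simp only [Finset.mem_filter, Finset.mem_product]
    constructor
    · rintro ⟨-, h1, h2⟩; exact ⟨h1, h2⟩
    · rintro ⟨h1, h2⟩
      refine ⟨?_, h1, h2⟩
      rw [hAf, Set.Finite.mem_toFinset] at h1
      rw [hBf, Set.Finite.mem_toFinset] at h2
      rw [hTf, Set.Finite.mem_toFinset]
      exact ⟨h1.2, h2.2, i, hik, h1.1, h2.1⟩
  have hprod2 : ∀ i : ℕ, i < k →
      Tf.filter (fun q => q.1 ∈ Af i ∧ q.2 ∈ Bf (k - 1 - i)) = Af i ×ˢ Bf (k - 1 - i) := by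
    intro i hik
    ext ⟨x, y⟩
    simp only [Finset.mem_filter, Finset.mem_product]
    constructor
    · rintro ⟨-, h1, h2⟩; exact ⟨h1, h2⟩
    · rintro ⟨h1, h2⟩
      refine ⟨?_, h1, h2⟩
      rw [hAf, Set.Finite.mem_toFinset] at h1
      rw [hBf, Set.Finite.mem_toFinset] at h2
      rw [hTf, Set.Finite.mem_toFinset]
      refine ⟨h1.2, h2.2, i + 1, by omega, ?_, ?_⟩
      · exact smul_set_mono_of_zero_mem hPconv h0P (by positivity)
          (by exact_mod_cast Nat.le_succ i) h1.1
      · have he : (k - 1 - i : ℕ) = (k - (i + 1) : ℕ) := by omega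
        rw [← he]
        exact h2.1
  -- inner filters as windows
  have hfiltereq1 : ∀ x y, (x, y) ∈ Tf →
      (Finset.range (k + 1)).filter (fun i => x ∈ Af i ∧ y ∈ Bf (k - i)) =
        (Finset.range (k + 1)).filter
          (fun i => minIdx P x ≤ i ∧ i + minIdx Q y < k + 1) := by
    intro x y hq
    obtain ⟨hxl, hyl, i0, hi0, hxP0, hyQ0⟩ := hTfmem x y hq
    have hexP : ∃ j : ℕ, x ∈ ((j : ℕ) : ℝ) • P := ⟨i0, hxP0⟩
    have hexQ : ∃ j : ℕ, y ∈ ((j : ℕ) : ℝ) • Q := ⟨k - i0, hyQ0⟩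
    apply Finset.filter_congr
    intro i hi
    rw [Finset.mem_range] at hi
    have h1 : x ∈ Af i ↔ minIdx P x ≤ i := by
      rw [hAf, Set.Finite.mem_toFinset]
      constructor
      · rintro ⟨hm, -⟩; exact minIdx_le hm
      · intro h; exact ⟨mem_of_minIdx_le hPconv h0P hexP h, hxl⟩
    have h2 : y ∈ Bf (k - i) ↔ minIdx Q y ≤ k - i := by
      rw [hBf, Set.Finite.mem_toFinset]
      constructor
      · rintro ⟨hm, -⟩; exact minIdx_le hm
      · intro h; exact ⟨mem_of_minIdx_le hQconv h0Q hexQ h, hyl⟩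
    rw [h1, h2]
    constructor
    · rintro ⟨hh1, hh2⟩; exact ⟨hh1, by omega⟩
    · rintro ⟨hh1, hh2⟩; exact ⟨hh1, by omega⟩
  have hfiltereq2 : ∀ x y, (x, y) ∈ Tf →
      (Finset.range k).filter (fun i => x ∈ Af i ∧ y ∈ Bf (k - 1 - i)) =
        (Finset.range k).filter
          (fun i => minIdx P x ≤ i ∧ i + minIdx Q y < k) := by
    intro x y hq
    obtain ⟨hxl, hyl, i0, hi0, hxP0, hyQ0⟩ := hTfmem x y hq
    have hexP : ∃ j : ℕ, x ∈ ((j : ℕ) : ℝ) • P := ⟨i0, hxP0⟩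
    have hexQ : ∃ j : ℕ, y ∈ ((j : ℕ) : ℝ) • Q := ⟨k - i0, hyQ0⟩
    apply Finset.filter_congr
    intro i hi
    rw [Finset.mem_range] at hi
    have h1 : x ∈ Af i ↔ minIdx P x ≤ i := by
      rw [hAf, Set.Finite.mem_toFinset]
      constructor
      · rintro ⟨hm, -⟩; exact minIdx_le hm
      · intro h; exact ⟨mem_of_minIdx_le hPconv h0P hexP h, hxl⟩
    have h2 : y ∈ Bf (k - 1 - i) ↔ minIdx Q y ≤ k - 1 - i := by
      rw [hBf, Set.Finite.mem_toFinset]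
      constructor
      · rintro ⟨hm, -⟩; exact minIdx_le hm
      · intro h; exact ⟨mem_of_minIdx_le hQconv h0Q hexQ h, hyl⟩
    rw [h1, h2]
    constructor
    · rintro ⟨hh1, hh2⟩; exact ⟨hh1, by omega⟩
    · rintro ⟨hh1, hh2⟩; exact ⟨hh1, by omega⟩
  -- the two double-counting identities (ℕ)
  have hsum1 : ∑ i ∈ Finset.range (k + 1), ehr P i * ehr Q (k - i) =
      ∑ q ∈ Tf, (k + 1 - minIdx P q.1 - minIdx Q q.2) := by
    have e1 : ∀ i ∈ Finset.range (k + 1), ehr P i * ehr Q (k - i) =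
        ∑ q ∈ Tf, if q.1 ∈ Af i ∧ q.2 ∈ Bf (k - i) then 1 else 0 := by
      intro i hi
      rw [Finset.mem_range] at hi
      rw [hehrP i, hehrQ (k - i), ← Finset.card_product, ← hprod1 i (by omega),
        Finset.card_filter]
    rw [Finset.sum_congr rfl e1, Finset.sum_comm]
    apply Finset.sum_congr rfl
    intro q hq
    rw [← Finset.card_filter, hfiltereq1 q.1 q.2 (by rwa [← Prod.mk.eta (p := q)] at hq),
      card_window (k + 1) (minIdx P q.1) (minIdx Q q.2)]
  have hsum2 : ∑ i ∈ Finset.range k, ehr P i * ehr Q (k - 1 - i) =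
      ∑ q ∈ Tf, (k - minIdx P q.1 - minIdx Q q.2) := by
    have e1 : ∀ i ∈ Finset.range k, ehr P i * ehr Q (k - 1 - i) =
        ∑ q ∈ Tf, if q.1 ∈ Af i ∧ q.2 ∈ Bf (k - 1 - i) then 1 else 0 := by
      intro i hi
      rw [Finset.mem_range] at hi
      rw [hehrP i, hehrQ (k - 1 - i), ← Finset.card_product, ← hprod2 i hi,
        Finset.card_filter]
    rw [Finset.sum_congr rfl e1, Finset.sum_comm]
    apply Finset.sum_congr rfl
    intro q hq
    rw [← Finset.card_filter, hfiltereq2 q.1 q.2 (by rwa [← Prod.mk.eta (p := q)] at hq),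
      card_window k (minIdx P q.1) (minIdx Q q.2)]
  -- LHS
  have hL : (ehr S k : ℤ) = (Tf.card : ℤ) := by
    rw [ehr_eq_ncard h0S k, hTimg, Set.ncard_image_of_injOn hTinj,
      Set.ncard_eq_toFinset_card _ hTfin]
  -- per-element difference is 1
  have hfinal : ∀ q ∈ Tf,
      ((k + 1 - minIdx P q.1 - minIdx Q q.2 : ℕ) : ℤ) -
        ((k - minIdx P q.1 - minIdx Q q.2 : ℕ) : ℤ) = 1 := by
    intro q hq
    obtain ⟨-, -, i0, hi0, hxP0, hyQ0⟩ := hTfmem q.1 q.2 (by rwa [← Prod.mk.eta (p := q)] at hq)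
    have ha := minIdx_le hxP0
    have hb := minIdx_le hyQ0
    omega
  calc (ehr S k : ℤ) = (Tf.card : ℤ) := hL
    _ = ∑ q ∈ Tf, (1 : ℤ) := by simp
    _ = ∑ q ∈ Tf, (((k + 1 - minIdx P q.1 - minIdx Q q.2 : ℕ) : ℤ) -
          ((k - minIdx P q.1 - minIdx Q q.2 : ℕ) : ℤ)) :=
        (Finset.sum_congr rfl hfinal).symm
    _ = (∑ i ∈ Finset.range (k + 1), (ehr P i : ℤ) * (ehr Q (k - i) : ℤ)) -
          ∑ i ∈ Finset.range k, (ehr P i : ℤ) * (ehr Q (k - 1 - i) : ℤ) := by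
        rw [Finset.sum_sub_distrib]
        congr 1
        · rw [← Nat.cast_sum, ← hsum1]
          push_cast
          rfl
        · rw [← Nat.cast_sum, ← hsum2]
          push_cast
          rfl


end Main

end ArxivFreeSum
end
end

section
/- Let J, K ⊂ ℝ^n be convex sets such that J is compact and J ⊕ K is an affine free sum with common point p ∈ ℚ^n, and let r := den(p). Suppose that pllenv(cone J) = (plenv(cone J))_ℤ. Then σ_{cone(J⊕K)}(z) = (1 − z^{rα(p)})·σ_{cone J}(z)·σ_{cone K}(z); coefficientwise, noting rα(p) ∈ ℤ^{n+1}, for every m ∈ ℤ^{n+1}, N_{J,K}(m) − N_{J,K}(m − rα(p)) equals 1 if m ∈ cone(J ⊕ K) and equals 0 otherwise. -/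
open Set Pointwise
open scoped Classical

noncomputable section

namespace ArxivFreeSum

variable {n : ℕ}

-- coordinate lemmas
lemma emb_castSucc (a : Fin n → ℝ) (i : Fin n) : emb a i.castSucc = a i := by
  simp [emb]
lemma emb_last (a : Fin n → ℝ) : emb a (Fin.last n) = 1 := by simp [emb]
lemma piext {x y : Fin (n+1) → ℝ} (h1 : ∀ i : Fin n, x i.castSucc = y i.castSucc)
    (h2 : x (Fin.last n) = y (Fin.last n)) : x = y := by
  funext j
  refine Fin.lastCases ?_ ?_ j
  · exact h2
  · exact h1

lemma cone_last_nonneg {C : Set (Fin n → ℝ)} {x : Fin (n+1) → ℝ} (hx : x ∈ cone C) :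
    0 ≤ x (Fin.last n) := by
  obtain ⟨l, a, _, hl, rfl⟩ := hx
  simpa [emb] using hl

lemma smul_emb_mem_cone {C : Set (Fin n → ℝ)} {a : Fin n → ℝ} (ha : a ∈ C) {l : ℝ}
    (hl : 0 ≤ l) : l • emb a ∈ cone C := ⟨l, a, ha, hl, rfl⟩

lemma zero_mem_cone {C : Set (Fin n → ℝ)} {a : Fin n → ℝ} (ha : a ∈ C) :
    (0 : Fin (n+1) → ℝ) ∈ cone C := by
  have := smul_emb_mem_cone ha (le_refl (0:ℝ))
  simpa using this

lemma cone_add {C : Set (Fin n → ℝ)} (hC : Convex ℝ C) {x y : Fin (n+1) → ℝ}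
    (hx : x ∈ cone C) (hy : y ∈ cone C) : x + y ∈ cone C := by
  obtain ⟨l, a, ha, hl, rfl⟩ := hx
  obtain ⟨k, b, hb, hk, rfl⟩ := hy
  rcases eq_or_lt_of_le (add_nonneg hl hk) with h0 | h0
  · have hl0 : l = 0 := by linarith
    have hk0 : k = 0 := by linarith
    subst hl0; subst hk0
    simpa using zero_mem_cone ha
  · refine ⟨l + k, (l/(l+k)) • a + (k/(l+k)) • b, ?_, le_of_lt h0, ?_⟩
    · exact hC ha hb (by positivity) (by positivity) (by field_simp)
    · refine piext (fun i => ?_) ?_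
      · simp only [Pi.add_apply, Pi.smul_apply, smul_eq_mul, emb_castSucc]
        field_simp
        
      · simp only [Pi.add_apply, Pi.smul_apply, smul_eq_mul, emb_last]
        ring

lemma cone_mono {C D : Set (Fin n → ℝ)} (h : C ⊆ D) : cone C ⊆ cone D := by
  rintro x ⟨l, a, ha, hl, rfl⟩; exact ⟨l, a, h ha, hl, rfl⟩

lemma cone_add_smul_emb {C : Set (Fin n → ℝ)} (hC : Convex ℝ C) {p : Fin n → ℝ}
    (hp : p ∈ C) {x : Fin (n+1) → ℝ} (hx : x ∈ cone C) {t : ℝ} (ht : 0 ≤ t) :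
    x + t • emb p ∈ cone C :=
  cone_add hC hx (smul_emb_mem_cone hp ht)


-- continuity of emb
lemma continuous_emb : Continuous (emb (n := n)) := by
  apply continuous_pi
  intro j
  refine Fin.lastCases ?_ ?_ j
  · simpa [emb] using continuous_const
  · intro i
    simpa [emb] using continuous_apply i

lemma cone_isClosed {J : Set (Fin n → ℝ)} (hJ : IsCompact J) : IsClosed (cone J) := by
  rcases J.eq_empty_or_nonempty with rfl | hne
  · have : cone (∅ : Set (Fin n → ℝ)) = ∅ := by
      ext x; simp [cone]
    rw [this]; exact isClosed_empty
  rw [← closure_subset_iff_isClosed]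
  intro x hx
  set c : ℝ := x (Fin.last n) + 1 with hc
  have hUopen : IsOpen {y : Fin (n+1) → ℝ | y (Fin.last n) < c} :=
    isOpen_lt (continuous_apply _) continuous_const
  have hxU : x ∈ {y : Fin (n+1) → ℝ | y (Fin.last n) < c} := by
    simp [hc]
  have hsub : {y : Fin (n+1) → ℝ | y (Fin.last n) < c} ∩ cone J ⊆
      (fun q : ℝ × (Fin n → ℝ) => q.1 • emb q.2) '' (Set.Icc 0 c ×ˢ J) := by
    rintro y ⟨hy1, l, a, ha, hl, rfl⟩
    refine ⟨(l, a), ⟨⟨hl, ?_⟩, ha⟩, rfl⟩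
    have h2 : (l • emb a) (Fin.last n) < c := hy1
    have : (l • emb a) (Fin.last n) = l := by simp [emb]
    rw [this] at h2
    exact le_of_lt h2
  have hcpt : IsCompact ((fun q : ℝ × (Fin n → ℝ) => q.1 • emb q.2) '' (Set.Icc 0 c ×ˢ J)) := by
    refine ((isCompact_Icc).prod hJ).image ?_
    exact continuous_fst.smul (continuous_emb.comp continuous_snd)
  have himg : (fun q : ℝ × (Fin n → ℝ) => q.1 • emb q.2) '' (Set.Icc 0 c ×ˢ J) ⊆ cone J := by
    rintro y ⟨⟨l, a⟩, ⟨⟨hl, _⟩, ha⟩, rfl⟩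
    exact ⟨l, a, ha, hl, rfl⟩
  have := hUopen.inter_closure (t := cone J) ⟨hxU, hx⟩
  have hcl : closure ({y : Fin (n+1) → ℝ | y (Fin.last n) < c} ∩ cone J) ⊆ cone J := by
    refine subset_trans (closure_mono hsub) ?_
    rw [hcpt.isClosed.closure_eq]
    exact himg
  exact hcl this



lemma rat_mul_den_int (q : ℚ) (D : ℕ) (h : (q.den : ℤ) ∣ (D : ℤ)) :
    ∃ z : ℤ, ((D : ℝ) * (q : ℝ)) = (z : ℝ) := by
  obtain ⟨k, hk⟩ := h
  refine ⟨q.num * k, ?_⟩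
  have h1 : (D : ℚ) * q = (q.num : ℚ) * k := by
    have : (D : ℚ) = (q.den : ℚ) * (k : ℚ) := by exact_mod_cast congrArg (fun z : ℤ => (z : ℚ)) hk
    rw [this]
    rw [mul_comm (q.den : ℚ) (k : ℚ), mul_assoc, mul_comm (q.den:ℚ) q, Rat.mul_den_eq_num]
    ring
  have := congrArg (fun x : ℚ => (x : ℝ)) h1
  push_cast at this ⊢
  linarith

lemma denPt_spec {p : Fin n → ℝ} (hp : IsRatPt p) :
    0 < denPt p ∧ IsLat ((denPt p : ℝ) • p) := by
  have hne : {r : ℕ | 0 < r ∧ IsLat ((r : ℝ) • p)}.Nonempty := by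
    choose qf hqf using hp
    refine ⟨∏ i, (qf i).den, ?_, ?_⟩
    · exact Finset.prod_pos (fun i _ => (qf i).pos)
    · intro i
      have hdvd : ((qf i).den : ℤ) ∣ ((∏ j, (qf j).den : ℕ) : ℤ) := by
        exact_mod_cast Finset.dvd_prod_of_mem (fun j => (qf j).den) (Finset.mem_univ i)
      obtain ⟨z, hz⟩ := rat_mul_den_int (qf i) _ hdvd
      exact ⟨z, by rw [Pi.smul_apply, smul_eq_mul, hqf i]; exact hz⟩
  exact Nat.sInf_mem hne

lemma isLat_sub {m : ℕ} {x y : Fin m → ℝ} (hx : IsLat x) (hy : IsLat y) : IsLat (x - y) := by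
  intro i; obtain ⟨a, ha⟩ := hx i; obtain ⟨b, hb⟩ := hy i
  exact ⟨a - b, by simp [ha, hb]⟩

lemma isLat_add {m : ℕ} {x y : Fin m → ℝ} (hx : IsLat x) (hy : IsLat y) : IsLat (x + y) := by
  intro i; obtain ⟨a, ha⟩ := hx i; obtain ⟨b, hb⟩ := hy i
  exact ⟨a + b, by simp [ha, hb]⟩

lemma denPt_dvd {p : Fin n → ℝ} (hp : IsRatPt p) {l : ℤ} (hl : IsLat ((l : ℝ) • p)) :
    (denPt p : ℤ) ∣ l := by
  obtain ⟨hr, hrl⟩ := denPt_spec hp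
  set r : ℕ := denPt p with hrdef
  have hrz : (0:ℤ) < (r:ℤ) := by exact_mod_cast hr
  set ρ : ℤ := l % (r : ℤ) with hρ
  have hρ0 : 0 ≤ ρ := Int.emod_nonneg l (by omega)
  have hρr : ρ < (r : ℤ) := Int.emod_lt_of_pos l hrz
  have hlat : IsLat ((ρ : ℝ) • p) := by
    intro i
    obtain ⟨a, ha⟩ := hl i
    obtain ⟨b, hb⟩ := hrl i
    refine ⟨a - (l / (r:ℤ)) * b, ?_⟩
    have hdecomp : (ρ : ℝ) = (l : ℝ) - ((l / (r:ℤ) : ℤ) : ℝ) * (r : ℝ) := by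
      have : l % (r:ℤ) = l - (r:ℤ) * (l / (r:ℤ)) := Int.emod_def l (r:ℤ)
      rw [hρ, this]; push_cast; ring
    rw [Pi.smul_apply, smul_eq_mul, hdecomp]
    rw [Pi.smul_apply, smul_eq_mul] at ha hb
    push_cast
    rw [sub_mul, mul_assoc, hb, ha]
  by_contra hcon
  have hρpos : 0 < ρ := by
    rcases lt_or_eq_of_le hρ0 with h | h
    · exact h
    · exfalso; exact hcon (Int.dvd_of_emod_eq_zero h.symm)
  have hmem : ρ.toNat ∈ {r : ℕ | 0 < r ∧ IsLat ((r : ℝ) • p)} := by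
    constructor
    · omega
    · intro i
      obtain ⟨z, hz⟩ := hlat i
      refine ⟨z, ?_⟩
      rw [Pi.smul_apply, smul_eq_mul]
      rw [Pi.smul_apply, smul_eq_mul] at hz
      rw [← hz]
      congr 1
      exact_mod_cast congrArg (fun z : ℤ => (z:ℝ)) (Int.toNat_of_nonneg hρ0)
  have h9 := Nat.sInf_le hmem
  have h10 : r ≤ ρ.toNat := h9
  omega


lemma span_sub_le_direction {J : Set (Fin n → ℝ)} {p : Fin n → ℝ} (hp : p ∈ J) :
    Submodule.span ℝ ((fun x => x - p) '' J) ≤ (affineSpan ℝ J).direction := by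
  rw [Submodule.span_le]
  rintro _ ⟨x, hx, rfl⟩
  rw [direction_affineSpan]
  exact vsub_mem_vectorSpan ℝ hx hp

lemma direct_zero {J K : Set (Fin n → ℝ)} {p : Fin n → ℝ} (hpJ : p ∈ J) (hpK : p ∈ K)
    (hIS : (affineSpan ℝ J : Set (Fin n → ℝ)) ∩ (affineSpan ℝ K : Set (Fin n → ℝ)) = {p})
    {d : Fin n → ℝ} (hdJ : d ∈ Submodule.span ℝ ((fun x => x - p) '' J))
    (hdK : d ∈ Submodule.span ℝ ((fun x => x - p) '' K)) : d = 0 := by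
  have h1 : d + p ∈ (affineSpan ℝ J : Set (Fin n → ℝ)) :=
    AffineSubspace.vadd_mem_of_mem_direction (span_sub_le_direction hpJ hdJ)
      (subset_affineSpan ℝ J hpJ)
  have h2 : d + p ∈ (affineSpan ℝ K : Set (Fin n → ℝ)) :=
    AffineSubspace.vadd_mem_of_mem_direction (span_sub_le_direction hpK hdK)
      (subset_affineSpan ℝ K hpK)
  have : d + p ∈ ({p} : Set (Fin n → ℝ)) := by rw [← hIS]; exact ⟨h1, h2⟩
  have hdp : d + p = p := this
  have := congrArg (fun x => x - p) hdp
  simpa using this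


lemma proj_mem_span {C : Set (Fin n → ℝ)} {p : Fin n → ℝ} {x : Fin (n+1) → ℝ}
    (hx : x ∈ cone C) :
    (fun i => x i.castSucc - x (Fin.last n) * p i) ∈
      Submodule.span ℝ ((fun y => y - p) '' C) := by
  obtain ⟨l, a, ha, hl, rfl⟩ := hx
  have : (fun i => (l • emb a) i.castSucc - (l • emb a) (Fin.last n) * p i) = l • (a - p) := by
    funext i
    simp [emb, mul_sub]
  rw [this]
  exact Submodule.smul_mem _ l (Submodule.subset_span ⟨a, ha, rfl⟩)

lemma isLat_cast (m : Fin (n+1) → ℤ) : IsLat (fun i => (m i : ℝ)) := fun i => ⟨m i, rfl⟩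


set_option maxHeartbeats 3000000 in
/-- Theorem 5.6 (multivariate Braun formula for affine free sums). -/
theorem multivariate_braun_affine {n : ℕ} (hn : 1 ≤ n) (J K : Set (Fin n → ℝ))
    (p : Fin n → ℝ) (hJconv : Convex ℝ J) (hKconv : Convex ℝ K) (hJcpt : IsCompact J)
    (hfree : IsAffineFreeSum J K p) (henv : pllenv p J = latt (plenv p J)) :
    ∀ v : Fin (n + 1) → ℤ, ((fun i => (v i : ℝ)) = (denPt p : ℝ) • emb p) →
      ∀ m : Fin (n + 1) → ℤ,
        (Npairs J K m : ℤ) - (Npairs J K (m - v) : ℤ) =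
          if (fun i => (m i : ℝ)) ∈ cone (convexHull ℝ (J ∪ K)) then 1 else 0 := by
  obtain ⟨hprat, hpJ, hpK, hIS, hfs⟩ := hfree
  obtain ⟨hrpos, hrlat⟩ := denPt_spec hprat
  intro v hv m
  set r : ℕ := denPt p with hrdef
  set H : Set (Fin n → ℝ) := convexHull ℝ (J ∪ K) with hHdef
  have hHconv : Convex ℝ H := convex_convexHull ℝ _
  have hJH : J ⊆ H := subset_trans subset_union_left (subset_convexHull ℝ _)
  have hKH : K ⊆ H := subset_trans subset_union_right (subset_convexHull ℝ _)
  set mb : Fin (n+1) → ℝ := fun i => (m i : ℝ) with hmbdef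
  set vb : Fin (n+1) → ℝ := fun i => (v i : ℝ) with hvbdef
  have hrcast : (0:ℝ) ≤ (r:ℝ) := Nat.cast_nonneg r
  have hmvb : (fun i => ((m - v) i : ℝ)) = mb - vb := by
    funext i; simp [hmbdef, hvbdef]
  have hsumH : ∀ x y : Fin (n+1) → ℝ, x ∈ cone J → y ∈ cone K → x + y ∈ cone H :=
    fun x y hx hy => cone_add hHconv (cone_mono hJH hx) (cone_mono hKH hy)
  by_cases hm : mb ∈ cone H
  · rw [if_pos hm]
    -- decompose m as a real point of the cone
    obtain ⟨l, q0, hq0, hl, hmeq⟩ := hm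
    have hJne : J.Nonempty := ⟨p, hpJ⟩
    have hKne : K.Nonempty := ⟨p, hpK⟩
    have hq0' : q0 ∈ convexJoin ℝ J K := by
      have := convexHull_union hJne hKne (𝕜 := ℝ)
      rw [hHdef, this, hJconv.convexHull_eq, hKconv.convexHull_eq] at hq0
      exact hq0
    rw [mem_convexJoin] at hq0'
    obtain ⟨a, haJ, b, hbK, hseg⟩ := hq0'
    obtain ⟨c₁, c₂, hc₁, hc₂, hc12, hcomb⟩ := hseg
    set s₀ : ℝ := l * c₁ with hs₀def
    set t₀ : ℝ := l * c₂ with ht₀def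
    have hs₀ : 0 ≤ s₀ := mul_nonneg hl hc₁
    have ht₀ : 0 ≤ t₀ := mul_nonneg hl hc₂
    set x₀ : Fin (n+1) → ℝ := s₀ • emb a with hx₀def
    set y₀ : Fin (n+1) → ℝ := t₀ • emb b with hy₀def
    have hx₀ : x₀ ∈ cone J := smul_emb_mem_cone haJ hs₀
    have hy₀ : y₀ ∈ cone K := smul_emb_mem_cone hbK ht₀
    have hlast : mb (Fin.last n) = l := by
      rw [hmeq]; simp [emb]
    have hxy₀ : x₀ + y₀ = mb := by
      rw [hmeq, hx₀def, hy₀def]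
      refine piext (fun i => ?_) ?_
      · simp only [Pi.add_apply, Pi.smul_apply, smul_eq_mul, emb_castSucc]
        rw [hs₀def, ht₀def, ← hcomb]
        simp only [Pi.add_apply, Pi.smul_apply, smul_eq_mul]
        ring
      · simp only [Pi.add_apply, Pi.smul_apply, smul_eq_mul, emb_last]
        rw [hs₀def, ht₀def]
        nlinarith [hc12]
    set h : ℤ := m (Fin.last n) with hhdef
    have hhl : (h : ℝ) = l := by rw [← hlast]
    -- the projection map
    set Φ : (Fin (n+1) → ℝ) → (Fin n → ℝ) :=
      fun x => fun i => x i.castSucc - x (Fin.last n) * p i with hΦdef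
    have hΦadd : ∀ x y : Fin (n+1) → ℝ, Φ (x + y) = Φ x + Φ y := by
      intro x y; funext i; simp [hΦdef]; ring
    have hΦspanJ : ∀ x ∈ cone J, Φ x ∈ Submodule.span ℝ ((fun y => y - p) '' J) :=
      fun x hx => proj_mem_span hx
    have hΦspanK : ∀ x ∈ cone K, Φ x ∈ Submodule.span ℝ ((fun y => y - p) '' K) :=
      fun x hx => proj_mem_span hx
    -- apply the free sum property to Φ mb
    have hΦmb_span : Φ mb ∈ Submodule.span ℝ ((fun x => x - p) '' (J ∪ K)) := by
      rw [← hxy₀, hΦadd]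
      exact Submodule.add_mem _
        (Submodule.span_mono (Set.image_mono Set.subset_union_left) (hΦspanJ x₀ hx₀))
        (Submodule.span_mono (Set.image_mono Set.subset_union_right) (hΦspanK y₀ hy₀))
    have hΦmb_lambda : InLambda p (Φ mb) := by
      refine ⟨fun i => m i.castSucc, -h, ?_⟩
      funext i
      simp only [hΦdef, Pi.add_apply, Pi.smul_apply, smul_eq_mul]
      have : mb (Fin.last n) = (h:ℝ) := by rw [hhl, hlast]
      rw [this]
      push_cast
      simp only [hmbdef]
      ring
    obtain ⟨⟨u, w⟩, ⟨⟨huspan, huΛ⟩, ⟨hwspan, hwΛ⟩, hsumuw⟩, -⟩ := hfs (Φ mb) hΦmb_span hΦmb_lambda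
    simp only at huspan huΛ hwspan hwΛ hsumuw
    -- identification of decompositions
    have ident : ∀ x y : Fin (n+1) → ℝ, x ∈ cone J → y ∈ cone K → Φ x + Φ y = u + w →
        Φ x = u := by
      intro x y hx hy hxyuw
      have hd : Φ x - u ∈ Submodule.span ℝ ((fun y => y - p) '' J) :=
        Submodule.sub_mem _ (hΦspanJ x hx) huspan
      have hd2 : Φ x - u = w - Φ y := by
        funext i
        have := congrFun hxyuw i
        simp only [Pi.add_apply, Pi.sub_apply] at this ⊢
        linarith
      have hdK : Φ x - u ∈ Submodule.span ℝ ((fun y => y - p) '' K) := by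
        rw [hd2]; exact Submodule.sub_mem _ hwspan (hΦspanK y hy)
      exact sub_eq_zero.mp (direct_zero hpJ hpK hIS hd hdK)
    -- the line X
    set X : ℝ → (Fin (n+1) → ℝ) := fun s => Fin.snoc u 0 + s • emb p with hXdef
    have hXcs : ∀ (s : ℝ) (i : Fin n), X s i.castSucc = u i + s * p i := by
      intro s i; simp [hXdef, emb]
    have hXlast : ∀ s : ℝ, X s (Fin.last n) = s := by
      intro s; simp [hXdef, emb]
    have hXadd : ∀ s t : ℝ, X (s + t) = X s + t • emb p := by
      intro s t
      refine piext (fun i => ?_) ?_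
      · simp only [Pi.add_apply, Pi.smul_apply, smul_eq_mul, hXcs, emb_castSucc]; ring
      · simp only [Pi.add_apply, Pi.smul_apply, smul_eq_mul, hXlast, emb_last]; ring
    have hΦX : ∀ s : ℝ, Φ (X s) = u := by
      intro s; funext i
      simp only [hΦdef, hXcs, hXlast]; ring
    -- every point of cone J with projection u lies on the line
    have lineJ : ∀ x : Fin (n+1) → ℝ, Φ x = u → x = X (x (Fin.last n)) := by
      intro x hx
      refine piext (fun i => ?_) ?_
      · rw [hXcs]
        have := congrFun hx i
        simp only [hΦdef] at this
        linarith
      · rw [hXlast]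
    have hx₀X : x₀ = X s₀ := by
      have hΦx₀ : Φ x₀ = u := by
        apply ident x₀ y₀ hx₀ hy₀
        rw [← hΦadd, hxy₀, hsumuw]
      have hlx : x₀ (Fin.last n) = s₀ := by simp [hx₀def, emb]
      have := lineJ x₀ hΦx₀
      rw [hlx] at this
      exact this
    -- lattice structure on the line
    obtain ⟨zu, cu, hucu⟩ := huΛ
    have hXlatOf : ∀ s : ℤ, (r:ℤ) ∣ (cu + s) → IsLat (X (s:ℝ)) := by
      intro s ⟨k, hk⟩ j
      refine Fin.lastCases ?_ ?_ j
      · exact ⟨s, by rw [hXlast]⟩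
      · intro i
        obtain ⟨wi, hwi⟩ := hrlat i
        refine ⟨zu i + k * wi, ?_⟩
        rw [hXcs]
        have hui := congrFun hucu i
        simp only [Pi.add_apply, Pi.smul_apply, smul_eq_mul] at hui
        rw [Pi.smul_apply, smul_eq_mul] at hwi
        have hcuk : (cu : ℝ) + (s:ℝ) = (r:ℝ) * (k:ℝ) := by exact_mod_cast congrArg (fun z : ℤ => (z:ℝ)) hk
        push_cast
        rw [hui, ← hwi]
        linear_combination p i * hcuk
    have hXlatTo : ∀ s : ℤ, IsLat (X (s:ℝ)) → (r:ℤ) ∣ (cu + s) := by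
      intro s hs
      rw [hrdef]
      apply denPt_dvd hprat
      intro i
      obtain ⟨Zi, hZi⟩ := hs i.castSucc
      rw [hXcs] at hZi
      have hui := congrFun hucu i
      simp only [Pi.add_apply, Pi.smul_apply, smul_eq_mul] at hui
      refine ⟨Zi - zu i, ?_⟩
      rw [Pi.smul_apply, smul_eq_mul]
      push_cast
      rw [← hZi, hui]
      ring
    -- the set of admissible parameters in the residue class
    set Lset : Set ℤ := {s : ℤ | X (s:ℝ) ∈ cone J ∧ (r:ℤ) ∣ (cu + s)} with hLsetdef
    have hLbdd : ∀ s ∈ Lset, (0:ℤ) ≤ s := by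
      intro s hs
      have := cone_last_nonneg hs.1
      rw [hXlast] at this
      exact_mod_cast this
    have hXsub : ∀ s t : ℝ, X (s - t) = X s - t • emb p := by
      intro s t
      have h1 := hXadd (s - t) t
      rw [sub_add_cancel] at h1
      rw [h1]; abel
    have hLne : ∃ s : ℤ, s ∈ Lset := by
      set N : ℤ := max (⌈s₀⌉ + cu) 0 + 1 with hNdef
      refine ⟨-cu + (r:ℤ) * N, ?_, ⟨N, by ring⟩⟩
      have hN1 : 1 ≤ N := by
        have := le_max_right (⌈s₀⌉ + cu) 0
        omega
      have hNle : N ≤ (r:ℤ) * N := le_mul_of_one_le_left (by omega) (by exact_mod_cast hrpos)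
      have hNge : ⌈s₀⌉ + cu + 1 ≤ N := by
        have := le_max_left (⌈s₀⌉ + cu) 0
        omega
      have hs₁ : s₀ ≤ ((-cu + (r:ℤ) * N : ℤ) : ℝ) := by
        have hceil : s₀ ≤ (⌈s₀⌉ : ℝ) := Int.le_ceil s₀
        have : (⌈s₀⌉ : ℤ) + 1 ≤ -cu + (r:ℤ) * N := by linarith [hNle, hNge]
        have hcast : ((⌈s₀⌉ : ℤ) : ℝ) + 1 ≤ ((-cu + (r:ℤ) * N : ℤ) : ℝ) := by exact_mod_cast this
        linarith
      have : X ((( -cu + (r:ℤ) * N : ℤ) : ℝ)) =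
          X s₀ + ((((-cu + (r:ℤ) * N : ℤ) : ℝ)) - s₀) • emb p := by
        rw [← hXadd]; ring_nf
      rw [this, ← hx₀X]
      exact cone_add_smul_emb hJconv hpJ hx₀ (by linarith)
    obtain ⟨σ, hσmem, hσmin⟩ := Int.exists_least_of_bdd ⟨0, hLbdd⟩ hLne
    have hxσlat : IsLat (X (σ:ℝ)) := hXlatOf σ hσmem.2
    have hxσcone : X (σ:ℝ) ∈ cone J := hσmem.1
    -- the vertical fiber set and its supremum
    set Sl : Set ℝ := {t : ℝ | X (σ:ℝ) - t • emb p ∈ cone J} with hSldef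
    have hSlclosed : IsClosed Sl := by
      have : Sl = (fun t : ℝ => X (σ:ℝ) - t • emb p) ⁻¹' cone J := rfl
      rw [this]
      exact (cone_isClosed hJcpt).preimage
        (continuous_const.sub (continuous_id.smul continuous_const))
    have hSl0 : (0:ℝ) ∈ Sl := by
      have : X (σ:ℝ) - (0:ℝ) • emb p = X (σ:ℝ) := by simp
      simp only [hSldef, Set.mem_setOf_eq, this]
      exact hxσcone
    have hSlbdd : BddAbove Sl := by
      refine ⟨(σ:ℝ), fun t ht => ?_⟩
      have h1 : X (σ:ℝ) - t • emb p ∈ cone J := ht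
      rw [← hXsub] at h1
      have := cone_last_nonneg h1
      rw [hXlast] at this
      linarith
    set lam : ℝ := sSup Sl with hlamdef
    have hlammem : lam ∈ Sl := hSlclosed.csSup_mem ⟨0, hSl0⟩ hSlbdd
    have hlamle : ∀ t ∈ Sl, t ≤ lam := fun t ht => le_csSup hSlbdd ht
    have hlam0 : 0 ≤ lam := hlamle 0 hSl0
    have heps : epsP p J (X (σ:ℝ)) = X (σ:ℝ) - lam • emb p := rfl
    have hepslat : IsLat (epsP p J (X (σ:ℝ))) := by
      have h1 : epsP p J (X (σ:ℝ)) ∈ pllenv p J := ⟨X (σ:ℝ), ⟨hxσcone, hxσlat⟩, rfl⟩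
      rw [henv] at h1
      exact h1.2
    obtain ⟨ζ, hζ⟩ := hepslat (Fin.last n)
    rw [heps] at hζ
    have hζ' : (σ:ℝ) - lam = (ζ:ℝ) := by
      have : (X (σ:ℝ) - lam • emb p) (Fin.last n) = (σ:ℝ) - lam := by
        simp [hXlast, emb_last]
      rw [this] at hζ
      exact hζ
    have hlamval : lam = ((σ - ζ : ℤ) : ℝ) := by push_cast; linarith
    have hlatp : IsLat (((σ - ζ : ℤ) : ℝ) • p) := by
      intro i
      obtain ⟨Zi, hZi⟩ := hxσlat i.castSucc
      obtain ⟨Wi, hWi⟩ := hepslat i.castSucc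
      rw [heps] at hWi
      have h2 : (X (σ:ℝ) - lam • emb p) i.castSucc = X (σ:ℝ) i.castSucc - lam * p i := by
        simp [emb_castSucc]
      rw [h2, hZi] at hWi
      refine ⟨Zi - Wi, ?_⟩
      rw [Pi.smul_apply, smul_eq_mul, ← hlamval]
      push_cast
      linarith
    have hdvdζ : (r:ℤ) ∣ (σ - ζ) := by rw [hrdef]; exact denPt_dvd hprat hlatp
    have hζLset : ζ ∈ Lset := by
      constructor
      · have harg : (ζ:ℝ) = (σ:ℝ) - lam := by linarith
        have : X (ζ:ℝ) = X (σ:ℝ) - lam • emb p := by rw [harg, hXsub]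
        rw [this]
        exact hlammem
      · have : cu + ζ = (cu + σ) - (σ - ζ) := by ring
        rw [this]
        exact dvd_sub hσmem.2 hdvdζ
    have hζσ : ζ = σ := by
      have h1 : σ ≤ ζ := hσmin ζ hζLset
      have h2 : ζ ≤ σ := by
        have : (ζ:ℝ) ≤ (σ:ℝ) := by linarith
        exact_mod_cast this
      omega
    have hlamzero : lam = 0 := by
      rw [hlamval, hζσ]; simp
    have hσle : (σ:ℝ) ≤ s₀ := by
      by_contra hcon
      push_neg at hcon
      have ht : (σ:ℝ) - s₀ ∈ Sl := by
        have : X (σ:ℝ) - ((σ:ℝ) - s₀) • emb p = X s₀ := by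
          rw [← hXsub]; ring_nf
        simp only [hSldef, Set.mem_setOf_eq, this]
        rw [← hx₀X]
        exact hx₀
      have := hlamle _ ht
      rw [hlamzero] at this
      linarith
    have hyσcone : mb - X (σ:ℝ) ∈ cone K := by
      have h1 : mb - X (σ:ℝ) = y₀ + (s₀ - (σ:ℝ)) • emb p := by
        rw [← hxy₀, hx₀X]
        have : X s₀ = X (σ:ℝ) + (s₀ - (σ:ℝ)) • emb p := by
          rw [← hXadd]; ring_nf
        rw [this]; abel
      rw [h1]
      exact cone_add_smul_emb hKconv hpK hy₀ (by linarith)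
    have hyσlat : IsLat (mb - X (σ:ℝ)) := isLat_sub (isLat_cast m) hxσlat
    have hmbl : mb (Fin.last n) = (h:ℝ) := by rw [hlast, hhl]
    -- the two parameter sets
    set L1 : Set ℤ := {s : ℤ | X (s:ℝ) ∈ latt (cone J) ∧ mb - X (s:ℝ) ∈ latt (cone K)}
      with hL1def
    set L2 : Set ℤ := {s : ℤ | X ((s:ℝ) - (r:ℝ)) ∈ latt (cone J) ∧
      mb - X (s:ℝ) ∈ latt (cone K)} with hL2def
    have hvblat : IsLat vb := isLat_cast v
    have hXshift : ∀ s : ℝ, X s = X (s - (r:ℝ)) + (r:ℝ) • emb p := by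
      intro s
      have := hXadd (s - (r:ℝ)) (r:ℝ)
      rw [sub_add_cancel] at this
      exact this
    have hL21 : L2 ⊆ L1 := by
      rintro s ⟨⟨hc, hlt⟩, hK2⟩
      refine ⟨⟨?_, ?_⟩, hK2⟩
      · rw [hXshift (s:ℝ)]
        exact cone_add_smul_emb hJconv hpJ hc hrcast
      · rw [hXshift (s:ℝ), ← hv]
        exact isLat_add hlt hvblat
    have hL1fin : L1.Finite := by
      apply Set.Finite.subset (Set.finite_Icc (0:ℤ) h)
      rintro s ⟨⟨hc, -⟩, hK2, -⟩
      have h1 : (0:ℝ) ≤ (s:ℝ) := by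
        have := cone_last_nonneg hc; rwa [hXlast] at this
      have h2 : (0:ℝ) ≤ (h:ℝ) - (s:ℝ) := by
        have h3 := cone_last_nonneg hK2
        have he : (mb - X (s:ℝ)) (Fin.last n) = (h:ℝ) - (s:ℝ) := by
          simp only [Pi.sub_apply, hXlast, hmbl]
        rwa [he] at h3
      constructor
      · exact_mod_cast h1
      · have : (s:ℝ) ≤ (h:ℝ) := by linarith
        exact_mod_cast this
    have hσL1 : σ ∈ L1 := ⟨⟨hxσcone, hxσlat⟩, hyσcone, hyσlat⟩
    have hσnL2 : σ ∉ L2 := by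
      rintro ⟨⟨hc, -⟩, -⟩
      have hrSl : ((r:ℕ) : ℝ) ∈ Sl := by
        simp only [hSldef, Set.mem_setOf_eq, ← hXsub]
        exact hc
      have h4 := hlamle _ hrSl
      rw [hlamzero] at h4
      have h5 : (0:ℝ) < (r:ℝ) := by exact_mod_cast hrpos
      linarith
    have hdiff : L1 \ L2 = {σ} := by
      ext s
      constructor
      · rintro ⟨⟨⟨hcJ, hlatJ⟩, hK2⟩, hnot⟩
        have hdvds : (r:ℤ) ∣ (cu + s) := hXlatTo s hlatJ
        have hσs : σ ≤ s := hσmin s ⟨hcJ, hdvds⟩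
        rcases eq_or_lt_of_le hσs with heq | hlt
        · simp [← heq]
        · exfalso
          apply hnot
          have hdvd2 : (r:ℤ) ∣ (s - σ) := by
            have he : s - σ = (cu + s) - (cu + σ) := by ring
            rw [he]; exact dvd_sub hdvds hσmem.2
          have hge : σ + (r:ℤ) ≤ s := by
            obtain ⟨k, hk⟩ := hdvd2
            have hrz : (0:ℤ) < (r:ℤ) := by exact_mod_cast hrpos
            have hposk : 0 < (r:ℤ) * k := by rw [← hk]; omega
            have hk1 : 1 ≤ k := by nlinarith
            nlinarith
          have hgeR : (σ:ℝ) + (r:ℝ) ≤ (s:ℝ) := by exact_mod_cast hge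
          refine ⟨⟨?_, ?_⟩, hK2⟩
          · have e : ((s:ℝ) - (r:ℝ)) = (σ:ℝ) + ((s:ℝ) - (r:ℝ) - (σ:ℝ)) := by ring
            rw [e, hXadd]
            exact cone_add_smul_emb hJconv hpJ hxσcone (by linarith)
          · have e : ((s:ℝ) - (r:ℝ)) = (((s - (r:ℤ)) : ℤ) : ℝ) := by push_cast; ring
            rw [e]
            apply hXlatOf
            have he : cu + (s - (r:ℤ)) = (cu + s) - (r:ℤ) := by ring
            rw [he]
            exact dvd_sub hdvds dvd_rfl
      · intro hs
        rw [Set.mem_singleton_iff] at hs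
        subst hs
        exact ⟨hσL1, hσnL2⟩
    -- bijections with the pair sets
    have hginj : Function.Injective (fun s : ℤ => (X (s:ℝ), mb - X (s:ℝ))) := by
      intro s t hst
      have h1 : X (s:ℝ) = X (t:ℝ) := congrArg Prod.fst hst
      have h2 := congrFun h1 (Fin.last n)
      rw [hXlast, hXlast] at h2
      exact_mod_cast h2
    have hS1 : {q : (Fin (n + 1) → ℝ) × (Fin (n + 1) → ℝ) |
        q.1 ∈ latt (cone J) ∧ q.2 ∈ latt (cone K) ∧ q.1 + q.2 = fun i => (m i : ℝ)} =
        (fun s : ℤ => (X (s:ℝ), mb - X (s:ℝ))) '' L1 := by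
      ext q
      constructor
      · rintro ⟨hx, hy, hxy⟩
        obtain ⟨sz, hsz⟩ := hx.2 (Fin.last n)
        have hΦx : Φ q.1 = u := by
          apply ident q.1 q.2 hx.1 hy.1
          rw [← hΦadd, hxy]
          exact hsumuw
        have hxX : q.1 = X ((sz:ℝ)) := by
          have h6 := lineJ q.1 hΦx
          rw [hsz] at h6
          exact h6
        have hyeq : q.2 = mb - X ((sz:ℝ)) := by
          rw [← hxX]
          have : mb = q.1 + q.2 := by rw [hmbdef, ← hxy]
          rw [this]
          abel
        refine ⟨sz, ⟨?_, ?_⟩, ?_⟩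
        · rw [← hxX]; exact hx
        · rw [← hyeq]; exact hy
        · dsimp only
          rw [Prod.ext_iff]
          exact ⟨hxX.symm, hyeq.symm⟩
      · rintro ⟨s, ⟨hs1, hs2⟩, rfl⟩
        refine ⟨hs1, hs2, ?_⟩
        show X ((s:ℝ)) + (mb - X ((s:ℝ))) = mb
        abel
    have hN1 : Npairs J K m = L1.ncard := by
      unfold Npairs
      rw [hS1]
      exact Set.ncard_image_of_injective _ hginj
    have hg2inj : Function.Injective
        (fun s : ℤ => (X ((s:ℝ) - (r:ℝ)), (fun i => ((m - v) i : ℝ)) - X ((s:ℝ) - (r:ℝ)))) := by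
      intro s t hst
      have h1 : X ((s:ℝ) - (r:ℝ)) = X ((t:ℝ) - (r:ℝ)) := congrArg Prod.fst hst
      have h2 := congrFun h1 (Fin.last n)
      rw [hXlast, hXlast] at h2
      have : (s:ℝ) = (t:ℝ) := by linarith
      exact_mod_cast this
    have hmvb2 : (fun i => ((m - v) i : ℝ)) = mb - vb := hmvb
    have hΦsub : ∀ x y : Fin (n+1) → ℝ, Φ (x - y) = Φ x - Φ y := by
      intro x y; funext i; simp only [hΦdef, Pi.sub_apply]; ring
    have hΦvb : Φ vb = 0 := by
      funext i
      rw [hv]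
      simp only [hΦdef, Pi.smul_apply, smul_eq_mul, emb_castSucc, emb_last, Pi.zero_apply]
      ring
    have hS2 : {q : (Fin (n + 1) → ℝ) × (Fin (n + 1) → ℝ) |
        q.1 ∈ latt (cone J) ∧ q.2 ∈ latt (cone K) ∧ q.1 + q.2 = fun i => ((m - v) i : ℝ)} =
        (fun s : ℤ => (X ((s:ℝ) - (r:ℝ)), (fun i => ((m - v) i : ℝ)) - X ((s:ℝ) - (r:ℝ)))) ''
          L2 := by
      ext q
      constructor
      · rintro ⟨hx, hy, hxy⟩
        obtain ⟨sz, hsz⟩ := hx.2 (Fin.last n)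
        have hΦx : Φ q.1 = u := by
          apply ident q.1 q.2 hx.1 hy.1
          rw [← hΦadd, hxy, hmvb2, hΦsub, hΦvb, hsumuw]
          abel
        have hxX : q.1 = X ((sz:ℝ)) := by
          have h6 := lineJ q.1 hΦx
          rw [hsz] at h6
          exact h6
        have hcast : ((sz + (r:ℤ) : ℤ) : ℝ) - (r:ℝ) = (sz : ℝ) := by push_cast; ring
        have hyeq : q.2 = (fun i => ((m - v) i : ℝ)) - X ((sz:ℝ)) := by
          rw [← hxX, ← hxy]
          abel
        refine ⟨sz + (r:ℤ), ⟨?_, ?_⟩, ?_⟩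
        · rw [hcast, ← hxX]; exact hx
        · have he : mb - X (((sz + (r:ℤ) : ℤ) : ℝ)) = q.2 := by
            have he2 : X (((sz + (r:ℤ) : ℤ) : ℝ)) = X ((sz:ℝ)) + (r:ℝ) • emb p := by
              have h8 := hXshift (((sz + (r:ℤ) : ℤ) : ℝ))
              rw [hcast] at h8
              exact h8
            rw [he2, hyeq, hmvb2, hv]
            abel
          rw [he]; exact hy
        · dsimp only
          rw [Prod.ext_iff, hcast]
          exact ⟨hxX.symm, hyeq.symm⟩
      · rintro ⟨s, ⟨hs1, hs2⟩, rfl⟩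
        dsimp only
        refine ⟨hs1, ?_, ?_⟩
        · have he : (fun i => ((m - v) i : ℝ)) - X ((s:ℝ) - (r:ℝ)) = mb - X (s:ℝ) := by
            rw [hmvb2, hXshift (s:ℝ), hv]
            abel
          rw [he]; exact hs2
        · rw [hmvb2]
          exact add_sub_cancel _ _
    have hN2 : Npairs J K (m - v) = L2.ncard := by
      unfold Npairs
      rw [hS2]
      exact Set.ncard_image_of_injective _ hg2inj
    rw [hN1, hN2]
    have hL2fin : L2.Finite := hL1fin.subset hL21
    have hcard : (L1 \ L2).ncard = L1.ncard - L2.ncard := Set.ncard_diff hL21 hL2fin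
    have hle : L2.ncard ≤ L1.ncard := Set.ncard_le_ncard hL21 hL1fin
    have hone : (L1 \ L2).ncard = 1 := by rw [hdiff]; exact Set.ncard_singleton σ
    omega
  · rw [if_neg hm]
    have e1 : {q : (Fin (n + 1) → ℝ) × (Fin (n + 1) → ℝ) |
        q.1 ∈ latt (cone J) ∧ q.2 ∈ latt (cone K) ∧ q.1 + q.2 = fun i => (m i : ℝ)} = ∅ := by
      ext ⟨x, y⟩
      simp only [Set.mem_setOf_eq, Set.mem_empty_iff_false, iff_false, not_and]
      intro hx hy hxy
      apply hm
      have hmb2 : mb = x + y := by rw [hmbdef]; exact hxy.symm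
      rw [hmb2]; exact hsumH x y hx.1 hy.1
    have e2 : {q : (Fin (n + 1) → ℝ) × (Fin (n + 1) → ℝ) |
        q.1 ∈ latt (cone J) ∧ q.2 ∈ latt (cone K) ∧ q.1 + q.2 = fun i => ((m - v) i : ℝ)} = ∅ := by
      ext ⟨x, y⟩
      simp only [Set.mem_setOf_eq, Set.mem_empty_iff_false, iff_false, not_and]
      intro hx hy hxy
      rw [hmvb] at hxy
      apply hm
      have : mb = (x + y) + (r:ℝ) • emb p := by
        rw [hxy, ← hv]; funext i; simp [hvbdef]
      rw [this]
      exact cone_add_smul_emb hHconv (hJH hpJ) (hsumH x y hx.1 hy.1) hrcast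
    unfold Npairs
    rw [e1, e2]
    simp


end ArxivFreeSum
end
end
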